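/- arXiv:2504.21305 — 3 statements merged into one kernel-verified Lean document; each statement's English description precedes it below -/
import Mathlib

section
/- There exists an absolute constant C > 0 with the following property: for every h > 0, every b = (b₁, b₂) ∈ ℝ² with b₁ > 0, and every function v : ℝ² → ℝ that is continuously differentiable on an open neighborhood of the closure of the square Q_h(b) = (b₁, b₁+h) × (b₂, b₂+h), one has ∫_{∂Q_h(b)} x₁ v² dH¹ ≤ C · ((b₁+h)/b₁) · ( h⁻¹ ∫_{Q_h(b)} x₁ v² dA + h ∫_{Q_h(b)} x₁ |∇v|² dA ), where ∂Q_h(b) is the boundary of the square equipped with the one-dimensional Hausdorff measure H¹, and dA is the two-dimensional Lebesgue measure. -/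
open MeasureTheory
open Set

section AuxWeightedTrace


/-- The open square `(b₁, b₁+h) × (b₂, b₂+h)`. -/
def sqEl (b : ℝ × ℝ) (h : ℝ) : Set (ℝ × ℝ) :=
  Set.Ioo b.1 (b.1 + h) ×ˢ Set.Ioo b.2 (b.2 + h)

/-- Squared Euclidean norm of the gradient of a scalar field on `ℝ²`. -/
noncomputable def gradSq (v : ℝ × ℝ → ℝ) (x : ℝ × ℝ) : ℝ :=
  (fderiv ℝ v x (1, 0)) ^ 2 + (fderiv ℝ v x (0, 1)) ^ 2

lemma isoH (c : ℝ) : Isometry (fun t : ℝ => (t, c)) :=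
  Isometry.of_dist_eq fun s t => by simp [Prod.dist_eq, dist_nonneg]

lemma isoV (c : ℝ) : Isometry (fun t : ℝ => (c, t)) :=
  Isometry.of_dist_eq fun s t => by simp [Prod.dist_eq, dist_nonneg]

lemma mapH (c : ℝ) {s : Set ℝ} (hs : MeasurableSet s) :
    (μH[1] : Measure (ℝ × ℝ)).restrict (s ×ˢ {c})
      = Measure.map (fun t : ℝ => (t, c)) (volume.restrict s) := by
  have hrange : Set.range (fun t : ℝ => (t, c)) = Set.univ ×ˢ {c} := by
    ext x; simp [eq_comm, Prod.ext_iff]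
  have h1 : Measure.map (fun t : ℝ => (t, c)) (μH[1] : Measure ℝ)
      = (μH[1] : Measure (ℝ × ℝ)).restrict (Set.univ ×ˢ {c}) := by
    rw [(isoH c).map_hausdorffMeasure (Or.inl one_pos.le), hrange]
  have h2 : (s ×ˢ univ) ∩ (univ ×ˢ ({c} : Set ℝ)) = s ×ˢ {c} := by
    ext x
    simp only [Set.mem_inter_iff, Set.mem_prod, Set.mem_univ, Set.mem_singleton_iff]
    aesop
  rw [← h2, ← Measure.restrict_restrict (hs.prod MeasurableSet.univ), ← h1,
    Measure.restrict_map (isoH c).continuous.measurable (hs.prod MeasurableSet.univ),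
    MeasureTheory.hausdorffMeasure_real]
  congr 1
  ext t; simp

lemma mapV (c : ℝ) {s : Set ℝ} (hs : MeasurableSet s) :
    (μH[1] : Measure (ℝ × ℝ)).restrict (({c} : Set ℝ) ×ˢ s)
      = Measure.map (fun t : ℝ => (c, t)) (volume.restrict s) := by
  have hrange : Set.range (fun t : ℝ => (c, t)) = ({c} : Set ℝ) ×ˢ Set.univ := by
    ext x; simp [eq_comm, Prod.ext_iff]
  have h1 : Measure.map (fun t : ℝ => (c, t)) (μH[1] : Measure ℝ)
      = (μH[1] : Measure (ℝ × ℝ)).restrict (({c} : Set ℝ) ×ˢ Set.univ) := by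
    rw [(isoV c).map_hausdorffMeasure (Or.inl one_pos.le), hrange]
  have h2 : (univ ×ˢ s) ∩ (({c} : Set ℝ) ×ˢ univ) = ({c} : Set ℝ) ×ˢ s := by
    ext x
    simp only [Set.mem_inter_iff, Set.mem_prod, Set.mem_univ, Set.mem_singleton_iff]
    aesop
  rw [← h2, ← Measure.restrict_restrict (MeasurableSet.univ.prod hs), ← h1,
    Measure.restrict_map (isoV c).continuous.measurable (MeasurableSet.univ.prod hs),
    MeasureTheory.hausdorffMeasure_real]
  congr 1
  ext t; simp

lemma intH (c : ℝ) {s : Set ℝ} (hs : MeasurableSet s) (f : ℝ × ℝ → ℝ)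
    (hf : AEStronglyMeasurable f ((μH[1] : Measure (ℝ × ℝ)).restrict (s ×ˢ {c}))) :
    ∫ x in s ×ˢ {c}, f x ∂(μH[1]) = ∫ t in s, f (t, c) := by
  have : ∫ x in s ×ˢ {c}, f x ∂(μH[1])
      = ∫ x, f x ∂(Measure.map (fun t : ℝ => (t, c)) (volume.restrict s)) := by
    rw [← mapH c hs]
  rw [this, integral_map (isoH c).continuous.measurable.aemeasurable
    (by rw [← mapH c hs]; exact hf)]

lemma intV (c : ℝ) {s : Set ℝ} (hs : MeasurableSet s) (f : ℝ × ℝ → ℝ)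
    (hf : AEStronglyMeasurable f ((μH[1] : Measure (ℝ × ℝ)).restrict (({c} : Set ℝ) ×ˢ s))) :
    ∫ x in ({c} : Set ℝ) ×ˢ s, f x ∂(μH[1]) = ∫ t in s, f (c, t) := by
  have : ∫ x in ({c} : Set ℝ) ×ˢ s, f x ∂(μH[1])
      = ∫ x, f x ∂(Measure.map (fun t : ℝ => (c, t)) (volume.restrict s)) := by
    rw [← mapV c hs]
  rw [this, integral_map (isoV c).continuous.measurable.aemeasurable
    (by rw [← mapV c hs]; exact hf)]

lemma young {h : ℝ} (a b : ℝ) (hh : 0 < h) : |2 * a * b| ≤ h⁻¹ * a ^ 2 + h * b ^ 2 := by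
  have h1 : 0 ≤ (|a| - h * |b|) ^ 2 := sq_nonneg _
  have h2 : |2 * a * b| = 2 * |a| * |b| := by
    rw [abs_mul, abs_mul]; simp
  have hinv : h * h⁻¹ = 1 := mul_inv_cancel₀ hh.ne'
  rw [h2]
  rw [← mul_le_mul_iff_right₀ hh]
  have e1 : h * (h⁻¹ * a ^ 2 + h * b ^ 2) = a ^ 2 + h ^ 2 * b ^ 2 := by
    field_simp
  rw [e1]
  nlinarith [sq_abs a, sq_abs b, abs_nonneg a, abs_nonneg b]

lemma oneD {c h : ℝ} (hh : 0 < h) {g g' : ℝ → ℝ}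
    (hg : ∀ t ∈ Set.Icc c (c + h), HasDerivAt g (g' t) t)
    (hcg : ContinuousOn g (Set.Icc c (c + h)))
    (hcg' : ContinuousOn g' (Set.Icc c (c + h)))
    {e : ℝ} (he : e ∈ Set.Icc c (c + h)) :
    g e ^ 2 ≤ 2 * h⁻¹ * (∫ t in Set.Ioo c (c + h), g t ^ 2)
      + h * (∫ t in Set.Ioo c (c + h), g' t ^ 2) := by
  set I := Set.Icc c (c + h) with hI
  have hFc : ContinuousOn (fun t => 2 * g t * g' t) I :=
    (continuousOn_const.mul hcg).mul hcg'
  have hFi : IntegrableOn (fun t => |2 * g t * g' t|) I :=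
    (hFc.abs.integrableOn_compact isCompact_Icc)
  have hg2i : IntegrableOn (fun t => g t ^ 2) I :=
    ((hcg.pow 2).integrableOn_compact isCompact_Icc)
  have hg'2i : IntegrableOn (fun t => g' t ^ 2) I :=
    ((hcg'.pow 2).integrableOn_compact isCompact_Icc)
  set M := ∫ t in I, |2 * g t * g' t| with hM
  have step1 : ∀ y ∈ I, g e ^ 2 ≤ g y ^ 2 + M := by
    intro y hy
    have hsub : Set.uIcc e y ⊆ I := Set.uIcc_subset_Icc he hy
    have hderiv : ∀ t ∈ Set.uIcc e y, HasDerivAt (fun t => g t ^ 2) (2 * g t * g' t) t := by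
      intro t ht
      have := (hg t (hsub ht)).fun_pow 2
      simpa [mul_comm] using this
    have hint : IntervalIntegrable (fun t => 2 * g t * g' t) volume e y :=
      (hFc.mono hsub).intervalIntegrable
    have ftc := intervalIntegral.integral_eq_sub_of_hasDerivAt hderiv hint
    have habs : |∫ t in e..y, 2 * g t * g' t| ≤ M := by
      have h1 : |∫ t in e..y, 2 * g t * g' t| ≤ ∫ t in Set.uIoc e y, |2 * g t * g' t| := by
        have := intervalIntegral.norm_integral_le_integral_norm_uIoc
            (f := fun t => 2 * g t * g' t) (a := e) (b := y) (μ := volume)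
        simpa only [Real.norm_eq_abs] using this
      refine h1.trans (setIntegral_mono_set hFi ?_ ?_)
      · exact Filter.Eventually.of_forall fun t => abs_nonneg _
      · exact ((Set.uIoc_subset_uIcc).trans hsub).eventuallyLE
    have hb := (abs_le.mp habs).1
    simp only [ftc] at hb ⊢
    linarith
  have hIoo_meas : MeasurableSet (Set.Ioo c (c + h)) := measurableSet_Ioo
  have hIoo_sub : Set.Ioo c (c + h) ⊆ I := Set.Ioo_subset_Icc_self
  have hvolE : volume (Set.Ioo c (c + h)) = ENNReal.ofReal h := by
    rw [Real.volume_Ioo]; congr 1; ring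
  have hvol : (volume (Set.Ioo c (c + h))).toReal = h := by
    rw [hvolE, ENNReal.toReal_ofReal hh.le]
  have hvolfin : volume (Set.Ioo c (c + h)) < ⊤ := by
    rw [hvolE]; exact ENNReal.ofReal_lt_top
  have hg2i' : IntegrableOn (fun t => g t ^ 2) (Set.Ioo c (c + h)) := hg2i.mono_set hIoo_sub
  have hg'2i' : IntegrableOn (fun t => g' t ^ 2) (Set.Ioo c (c + h)) := hg'2i.mono_set hIoo_sub
  set X := ∫ t in Set.Ioo c (c + h), g t ^ 2 with hX
  set Y := ∫ t in Set.Ioo c (c + h), g' t ^ 2 with hY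
  have step2 : h * g e ^ 2 ≤ X + h * M := by
    have hconst : (∫ _t in Set.Ioo c (c + h), g e ^ 2) = h * g e ^ 2 := by
      rw [setIntegral_const, measureReal_def, hvol, smul_eq_mul]
    have hmono : (∫ _t in Set.Ioo c (c + h), g e ^ 2)
        ≤ ∫ y in Set.Ioo c (c + h), (g y ^ 2 + M) := by
      refine setIntegral_mono_on ?_ ?_ hIoo_meas fun y hy => step1 y (hIoo_sub hy)
      · exact integrableOn_const hvolfin.ne
      · exact hg2i'.add (integrableOn_const hvolfin.ne)
    have hsplit : (∫ y in Set.Ioo c (c + h), (g y ^ 2 + M)) = X + h * M := by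
      rw [integral_add hg2i' (integrableOn_const hvolfin.ne),
        setIntegral_const, measureReal_def, hvol, smul_eq_mul]
    rw [hconst, hsplit] at hmono
    exact hmono
  have step3 : M ≤ h⁻¹ * X + h * Y := by
    have hMIoo : M = ∫ t in Set.Ioo c (c + h), |2 * g t * g' t| := by
      rw [hM, hI, integral_Icc_eq_integral_Ioo]
    rw [hMIoo]
    have hb : (∫ t in Set.Ioo c (c + h), |2 * g t * g' t|)
        ≤ ∫ t in Set.Ioo c (c + h), (h⁻¹ * g t ^ 2 + h * g' t ^ 2) := by
      refine setIntegral_mono_on (hFi.mono_set hIoo_sub) ?_ hIoo_meas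
        fun t _ => young (g t) (g' t) hh
      exact (hg2i'.const_mul _).add (hg'2i'.const_mul _)
    calc (∫ t in Set.Ioo c (c + h), |2 * g t * g' t|)
        ≤ ∫ t in Set.Ioo c (c + h), (h⁻¹ * g t ^ 2 + h * g' t ^ 2) := hb
      _ = h⁻¹ * X + h * Y := by
          rw [integral_add (hg2i'.const_mul _) (hg'2i'.const_mul _),
            integral_const_mul, integral_const_mul]
  have hhinv : h * h⁻¹ = 1 := mul_inv_cancel₀ hh.ne'
  rw [← mul_le_mul_iff_right₀ hh]
  have key : h * (2 * h⁻¹ * X + h * Y) = 2 * X + h ^ 2 * Y := by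
    field_simp
  rw [key]
  nlinarith [step2, step3, mul_le_mul_of_nonneg_left step3 hh.le]

lemma traceH {h a₁ c₁ : ℝ} (hh : 0 < h) (ha : 0 < a₁) {v : ℝ × ℝ → ℝ} {U : Set (ℝ × ℝ)}
    (hU : IsOpen U) (hKU : Set.Icc a₁ (a₁ + h) ×ˢ Set.Icc c₁ (c₁ + h) ⊆ U)
    (hv : ContDiffOn ℝ 1 v U) {d : ℝ} (hd : d ∈ Set.Icc c₁ (c₁ + h)) :
    (∫ t in Set.Icc a₁ (a₁ + h), t * v (t, d) ^ 2)
      ≤ 2 * h⁻¹ * (∫ x in Set.Ioo a₁ (a₁ + h) ×ˢ Set.Ioo c₁ (c₁ + h), x.1 * v x ^ 2)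
        + h * (∫ x in Set.Ioo a₁ (a₁ + h) ×ˢ Set.Ioo c₁ (c₁ + h),
            x.1 * (fderiv ℝ v x (0, 1)) ^ 2) := by
  set K := Set.Icc a₁ (a₁ + h) ×ˢ Set.Icc c₁ (c₁ + h) with hK
  set Q := Set.Ioo a₁ (a₁ + h) ×ˢ Set.Ioo c₁ (c₁ + h) with hQ
  have hQK : Q ⊆ K := Set.prod_mono Set.Ioo_subset_Icc_self Set.Ioo_subset_Icc_self
  have hKcomp : IsCompact K := isCompact_Icc.prod isCompact_Icc
  set d2 : ℝ × ℝ → ℝ := fun x => fderiv ℝ v x (0, 1) with hd2def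
  have hvdiff : ∀ x ∈ U, DifferentiableAt ℝ v x := fun x hx =>
    (hv.differentiableOn one_ne_zero).differentiableAt (hU.mem_nhds hx)
  have hcv : ContinuousOn v U := hv.continuousOn
  have hcfd : ContinuousOn (fderiv ℝ v) U := hv.continuousOn_fderiv_of_isOpen hU le_rfl
  have hcd2 : ContinuousOn d2 U :=
    (ContinuousLinearMap.apply ℝ ℝ ((0 : ℝ), (1 : ℝ))).continuous.comp_continuousOn hcfd
  set F0 : ℝ × ℝ → ℝ := fun x => x.1 * v x ^ 2 with hF0def
  set F2 : ℝ × ℝ → ℝ := fun x => x.1 * d2 x ^ 2 with hF2def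
  have hF0K : ContinuousOn F0 K :=
    continuous_fst.continuousOn.mul (((hcv.mono hKU)).pow 2)
  have hF2K : ContinuousOn F2 K :=
    continuous_fst.continuousOn.mul (((hcd2.mono hKU)).pow 2)
  have hF0i : IntegrableOn F0 Q := (hF0K.integrableOn_compact hKcomp).mono_set hQK
  have hF2i : IntegrableOn F2 Q := (hF2K.integrableOn_compact hKcomp).mono_set hQK
  -- product-measure versions
  have hF0p : Integrable F0 ((volume.restrict (Set.Ioo a₁ (a₁ + h))).prod
      (volume.restrict (Set.Ioo c₁ (c₁ + h)))) := by
    rw [Measure.prod_restrict]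
    rw [Measure.volume_eq_prod] at hF0i
    exact hF0i
  have hF2p : Integrable F2 ((volume.restrict (Set.Ioo a₁ (a₁ + h))).prod
      (volume.restrict (Set.Ioo c₁ (c₁ + h)))) := by
    rw [Measure.prod_restrict]
    rw [Measure.volume_eq_prod] at hF2i
    exact hF2i
  set G0 : ℝ → ℝ := fun t => ∫ y in Set.Ioo c₁ (c₁ + h), F0 (t, y) with hG0def
  set G2 : ℝ → ℝ := fun t => ∫ y in Set.Ioo c₁ (c₁ + h), F2 (t, y) with hG2def
  have hG0i : IntegrableOn G0 (Set.Ioo a₁ (a₁ + h)) := hF0p.integral_prod_left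
  have hG2i : IntegrableOn G2 (Set.Ioo a₁ (a₁ + h)) := hF2p.integral_prod_left
  have hG0Icc : IntegrableOn G0 (Set.Icc a₁ (a₁ + h)) :=
    (integrableOn_Icc_iff_integrableOn_Ioo).mpr hG0i
  have hG2Icc : IntegrableOn G2 (Set.Icc a₁ (a₁ + h)) :=
    (integrableOn_Icc_iff_integrableOn_Ioo).mpr hG2i
  -- pointwise bound
  have hpoint : ∀ t ∈ Set.Icc a₁ (a₁ + h),
      t * v (t, d) ^ 2 ≤ 2 * h⁻¹ * G0 t + h * G2 t := by
    intro t ht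
    have ht0 : 0 ≤ t := le_trans ha.le ht.1
    have hmaps : ∀ y ∈ Set.Icc c₁ (c₁ + h), ((t, y) : ℝ × ℝ) ∈ U := fun y hy =>
      hKU ⟨ht, hy⟩
    have hgd : ∀ y ∈ Set.Icc c₁ (c₁ + h),
        HasDerivAt (fun y => v (t, y)) (d2 (t, y)) y := by
      intro y hy
      have hl : HasDerivAt (fun y : ℝ => ((t, y) : ℝ × ℝ)) ((0 : ℝ), (1 : ℝ)) y :=
        (hasDerivAt_const y t).prodMk (hasDerivAt_id y)
      exact ((hvdiff _ (hmaps y hy)).hasFDerivAt).comp_hasDerivAt y hl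
    have hcontline : ContinuousOn (fun y : ℝ => ((t, y) : ℝ × ℝ)) (Set.Icc c₁ (c₁ + h)) :=
      (continuous_const.prodMk continuous_id).continuousOn
    have hcg : ContinuousOn (fun y => v (t, y)) (Set.Icc c₁ (c₁ + h)) :=
      ContinuousOn.comp hcv hcontline hmaps
    have hcg' : ContinuousOn (fun y => d2 (t, y)) (Set.Icc c₁ (c₁ + h)) :=
      ContinuousOn.comp hcd2 hcontline hmaps
    have htr := oneD hh hgd hcg hcg' hd
    have hmul := mul_le_mul_of_nonneg_left htr ht0
    have e1 : t * (2 * h⁻¹ * (∫ y in Set.Ioo c₁ (c₁ + h), v (t, y) ^ 2)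
        + h * (∫ y in Set.Ioo c₁ (c₁ + h), d2 (t, y) ^ 2))
        = 2 * h⁻¹ * G0 t + h * G2 t := by
      rw [hG0def, hG2def]
      simp only [hF0def, hF2def]
      rw [show (∫ y in Set.Ioo c₁ (c₁ + h), ((t, y) : ℝ × ℝ).1 * v (t, y) ^ 2)
          = ∫ y in Set.Ioo c₁ (c₁ + h), t * v (t, y) ^ 2 from rfl,
        show (∫ y in Set.Ioo c₁ (c₁ + h), ((t, y) : ℝ × ℝ).1 * d2 (t, y) ^ 2)
          = ∫ y in Set.Ioo c₁ (c₁ + h), t * d2 (t, y) ^ 2 from rfl,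
        integral_const_mul, integral_const_mul]
      ring
    rw [e1] at hmul
    exact hmul
  -- integrate the pointwise bound
  have hstep : (∫ t in Set.Icc a₁ (a₁ + h), t * v (t, d) ^ 2)
      ≤ ∫ t in Set.Icc a₁ (a₁ + h), (2 * h⁻¹ * G0 t + h * G2 t) := by
    refine integral_mono_of_nonneg ?_ ((hG0Icc.const_mul _).add (hG2Icc.const_mul _)) ?_
    · exact (ae_restrict_iff' measurableSet_Icc).mpr (ae_of_all _ fun t ht =>
        mul_nonneg (le_trans ha.le ht.1) (sq_nonneg _))
    · exact (ae_restrict_iff' measurableSet_Icc).mpr (ae_of_all _ hpoint)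
  -- identify the right-hand side with the double integrals
  have hsplit : (∫ t in Set.Icc a₁ (a₁ + h), (2 * h⁻¹ * G0 t + h * G2 t))
      = 2 * h⁻¹ * (∫ t in Set.Ioo a₁ (a₁ + h), G0 t)
        + h * (∫ t in Set.Ioo a₁ (a₁ + h), G2 t) := by
    rw [integral_add (hG0Icc.const_mul _) (hG2Icc.const_mul _), integral_const_mul,
      integral_const_mul, integral_Icc_eq_integral_Ioo, integral_Icc_eq_integral_Ioo]
  have hFub0 : (∫ x in Q, F0 x) = ∫ t in Set.Ioo a₁ (a₁ + h), G0 t := by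
    rw [hQ, Measure.volume_eq_prod, setIntegral_prod]
    rw [← Measure.volume_eq_prod]
    exact hF0i
  have hFub2 : (∫ x in Q, F2 x) = ∫ t in Set.Ioo a₁ (a₁ + h), G2 t := by
    rw [hQ, Measure.volume_eq_prod, setIntegral_prod]
    rw [← Measure.volume_eq_prod]
    exact hF2i
  calc (∫ t in Set.Icc a₁ (a₁ + h), t * v (t, d) ^ 2)
      ≤ ∫ t in Set.Icc a₁ (a₁ + h), (2 * h⁻¹ * G0 t + h * G2 t) := hstep
    _ = 2 * h⁻¹ * (∫ x in Q, F0 x) + h * (∫ x in Q, F2 x) := by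
        rw [hsplit, hFub0, hFub2]
    _ = _ := rfl

lemma traceV {h a₁ c₁ : ℝ} (hh : 0 < h) (ha : 0 < a₁) {v : ℝ × ℝ → ℝ} {U : Set (ℝ × ℝ)}
    (hU : IsOpen U) (hKU : Set.Icc a₁ (a₁ + h) ×ˢ Set.Icc c₁ (c₁ + h) ⊆ U)
    (hv : ContDiffOn ℝ 1 v U) {d : ℝ} (hd : d ∈ Set.Icc a₁ (a₁ + h)) :
    (∫ t in Set.Icc c₁ (c₁ + h), d * v (d, t) ^ 2)
      ≤ ((a₁ + h) / a₁) *
          (2 * h⁻¹ * (∫ x in Set.Ioo a₁ (a₁ + h) ×ˢ Set.Ioo c₁ (c₁ + h), x.1 * v x ^ 2)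
            + h * (∫ x in Set.Ioo a₁ (a₁ + h) ×ˢ Set.Ioo c₁ (c₁ + h),
                x.1 * (fderiv ℝ v x (1, 0)) ^ 2)) := by
  set K := Set.Icc a₁ (a₁ + h) ×ˢ Set.Icc c₁ (c₁ + h) with hK
  set Q := Set.Ioo a₁ (a₁ + h) ×ˢ Set.Ioo c₁ (c₁ + h) with hQ
  have hQK : Q ⊆ K := Set.prod_mono Set.Ioo_subset_Icc_self Set.Ioo_subset_Icc_self
  have hKcomp : IsCompact K := isCompact_Icc.prod isCompact_Icc
  set ρ := (a₁ + h) / a₁ with hρ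
  have hρ0 : 0 ≤ ρ := div_nonneg (by linarith) ha.le
  have hρa : ρ * a₁ = a₁ + h := div_mul_cancel₀ _ ha.ne'
  set d1 : ℝ × ℝ → ℝ := fun x => fderiv ℝ v x (1, 0) with hd1def
  have hvdiff : ∀ x ∈ U, DifferentiableAt ℝ v x := fun x hx =>
    (hv.differentiableOn one_ne_zero).differentiableAt (hU.mem_nhds hx)
  have hcv : ContinuousOn v U := hv.continuousOn
  have hcfd : ContinuousOn (fderiv ℝ v) U := hv.continuousOn_fderiv_of_isOpen hU le_rfl
  have hcd1 : ContinuousOn d1 U :=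
    (ContinuousLinearMap.apply ℝ ℝ ((1 : ℝ), (0 : ℝ))).continuous.comp_continuousOn hcfd
  set F0 : ℝ × ℝ → ℝ := fun x => x.1 * v x ^ 2 with hF0def
  set F1 : ℝ × ℝ → ℝ := fun x => x.1 * d1 x ^ 2 with hF1def
  have hF0K : ContinuousOn F0 K :=
    continuous_fst.continuousOn.mul (((hcv.mono hKU)).pow 2)
  have hF1K : ContinuousOn F1 K :=
    continuous_fst.continuousOn.mul (((hcd1.mono hKU)).pow 2)
  have hF0i : IntegrableOn F0 Q := (hF0K.integrableOn_compact hKcomp).mono_set hQK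
  have hF1i : IntegrableOn F1 Q := (hF1K.integrableOn_compact hKcomp).mono_set hQK
  have hF0p : Integrable F0 ((volume.restrict (Set.Ioo a₁ (a₁ + h))).prod
      (volume.restrict (Set.Ioo c₁ (c₁ + h)))) := by
    rw [Measure.prod_restrict]
    rw [Measure.volume_eq_prod] at hF0i
    exact hF0i
  have hF1p : Integrable F1 ((volume.restrict (Set.Ioo a₁ (a₁ + h))).prod
      (volume.restrict (Set.Ioo c₁ (c₁ + h)))) := by
    rw [Measure.prod_restrict]
    rw [Measure.volume_eq_prod] at hF1i
    exact hF1i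
  set H0 : ℝ → ℝ := fun y => ∫ s in Set.Ioo a₁ (a₁ + h), F0 (s, y) with hH0def
  set H1 : ℝ → ℝ := fun y => ∫ s in Set.Ioo a₁ (a₁ + h), F1 (s, y) with hH1def
  have hH0i : IntegrableOn H0 (Set.Ioo c₁ (c₁ + h)) := hF0p.integral_prod_right
  have hH1i : IntegrableOn H1 (Set.Ioo c₁ (c₁ + h)) := hF1p.integral_prod_right
  have hH0Icc : IntegrableOn H0 (Set.Icc c₁ (c₁ + h)) :=
    (integrableOn_Icc_iff_integrableOn_Ioo).mpr hH0i
  have hH1Icc : IntegrableOn H1 (Set.Icc c₁ (c₁ + h)) :=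
    (integrableOn_Icc_iff_integrableOn_Ioo).mpr hH1i
  have hd0 : 0 ≤ d := le_trans ha.le hd.1
  -- pointwise bound in y
  have hpoint : ∀ y ∈ Set.Icc c₁ (c₁ + h),
      d * v (d, y) ^ 2 ≤ 2 * h⁻¹ * (ρ * H0 y) + h * (ρ * H1 y) := by
    intro y hy
    have hmaps : ∀ s ∈ Set.Icc a₁ (a₁ + h), ((s, y) : ℝ × ℝ) ∈ U := fun s hs =>
      hKU ⟨hs, hy⟩
    have hgd : ∀ s ∈ Set.Icc a₁ (a₁ + h),
        HasDerivAt (fun s => v (s, y)) (d1 (s, y)) s := by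
      intro s hs
      have hl : HasDerivAt (fun s : ℝ => ((s, y) : ℝ × ℝ)) ((1 : ℝ), (0 : ℝ)) s :=
        (hasDerivAt_id s).prodMk (hasDerivAt_const s y)
      exact ((hvdiff _ (hmaps s hs)).hasFDerivAt).comp_hasDerivAt s hl
    have hcontline : ContinuousOn (fun s : ℝ => ((s, y) : ℝ × ℝ)) (Set.Icc a₁ (a₁ + h)) :=
      (continuous_id.prodMk continuous_const).continuousOn
    have hcg : ContinuousOn (fun s => v (s, y)) (Set.Icc a₁ (a₁ + h)) :=
      ContinuousOn.comp hcv hcontline hmaps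
    have hcg' : ContinuousOn (fun s => d1 (s, y)) (Set.Icc a₁ (a₁ + h)) :=
      ContinuousOn.comp hcd1 hcontline hmaps
    have htr := oneD hh hgd hcg hcg' hd
    have hmul := mul_le_mul_of_nonneg_left htr hd0
    -- bound d * ∫ v² by ρ * H0 y and d * ∫ d1² by ρ * H1 y
    have hwt : ∀ {w : ℝ → ℝ}, ContinuousOn w (Set.Icc a₁ (a₁ + h)) →
        d * (∫ s in Set.Ioo a₁ (a₁ + h), w s ^ 2)
          ≤ ρ * ∫ s in Set.Ioo a₁ (a₁ + h), s * w s ^ 2 := by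
      intro w hw
      have hw2 : IntegrableOn (fun s => w s ^ 2) (Set.Ioo a₁ (a₁ + h)) :=
        ((hw.pow 2).integrableOn_compact isCompact_Icc).mono_set Set.Ioo_subset_Icc_self
      have hsw2 : IntegrableOn (fun s => s * w s ^ 2) (Set.Ioo a₁ (a₁ + h)) :=
        ((continuous_id.continuousOn.mul (hw.pow 2)).integrableOn_compact
          isCompact_Icc).mono_set Set.Ioo_subset_Icc_self
      rw [← integral_const_mul, ← integral_const_mul]
      refine setIntegral_mono_on (hw2.const_mul _) (hsw2.const_mul _) measurableSet_Ioo ?_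
      intro s hs
      have hds : d ≤ ρ * s := by
        have h1 : d ≤ a₁ + h := hd.2
        have h2 : ρ * a₁ ≤ ρ * s := mul_le_mul_of_nonneg_left hs.1.le hρ0
        linarith [hρa]
      calc d * w s ^ 2 ≤ (ρ * s) * w s ^ 2 :=
            mul_le_mul_of_nonneg_right hds (sq_nonneg _)
        _ = ρ * (s * w s ^ 2) := by ring
    have hb0 := hwt hcg
    have hb1 := hwt hcg'
    have e1 : d * (2 * h⁻¹ * (∫ s in Set.Ioo a₁ (a₁ + h), v (s, y) ^ 2)
        + h * (∫ s in Set.Ioo a₁ (a₁ + h), d1 (s, y) ^ 2))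
        = 2 * h⁻¹ * (d * ∫ s in Set.Ioo a₁ (a₁ + h), v (s, y) ^ 2)
          + h * (d * ∫ s in Set.Ioo a₁ (a₁ + h), d1 (s, y) ^ 2) := by ring
    rw [e1] at hmul
    have h2h : (0 : ℝ) ≤ 2 * h⁻¹ := by positivity
    have hfin : 2 * h⁻¹ * (d * ∫ s in Set.Ioo a₁ (a₁ + h), v (s, y) ^ 2)
          + h * (d * ∫ s in Set.Ioo a₁ (a₁ + h), d1 (s, y) ^ 2)
        ≤ 2 * h⁻¹ * (ρ * H0 y) + h * (ρ * H1 y) := by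
      refine add_le_add (mul_le_mul_of_nonneg_left ?_ h2h)
        (mul_le_mul_of_nonneg_left ?_ hh.le)
      · exact hb0.trans_eq rfl
      · exact hb1.trans_eq rfl
    exact hmul.trans hfin
  -- integrate over y
  have hstep : (∫ t in Set.Icc c₁ (c₁ + h), d * v (d, t) ^ 2)
      ≤ ∫ y in Set.Icc c₁ (c₁ + h), (2 * h⁻¹ * (ρ * H0 y) + h * (ρ * H1 y)) := by
    refine integral_mono_of_nonneg ?_
      (((hH0Icc.const_mul _).const_mul _).add ((hH1Icc.const_mul _).const_mul _)) ?_
    · exact (ae_restrict_iff' measurableSet_Icc).mpr (ae_of_all _ fun t _ =>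
        mul_nonneg hd0 (sq_nonneg _))
    · exact (ae_restrict_iff' measurableSet_Icc).mpr (ae_of_all _ hpoint)
  have hsplit : (∫ y in Set.Icc c₁ (c₁ + h), (2 * h⁻¹ * (ρ * H0 y) + h * (ρ * H1 y)))
      = 2 * h⁻¹ * (ρ * ∫ y in Set.Ioo c₁ (c₁ + h), H0 y)
        + h * (ρ * ∫ y in Set.Ioo c₁ (c₁ + h), H1 y) := by
    rw [integral_add ((hH0Icc.const_mul _).const_mul _) ((hH1Icc.const_mul _).const_mul _)]
    rw [integral_Icc_eq_integral_Ioo, integral_Icc_eq_integral_Ioo,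
      integral_const_mul, integral_const_mul, integral_const_mul, integral_const_mul]
  have hFub0 : (∫ x in Q, F0 x) = ∫ y in Set.Ioo c₁ (c₁ + h), H0 y := by
    rw [hQ, Measure.volume_eq_prod, setIntegral_prod]
    · exact integral_integral_swap hF0p
    · rw [← Measure.volume_eq_prod]; exact hF0i
  have hFub1 : (∫ x in Q, F1 x) = ∫ y in Set.Ioo c₁ (c₁ + h), H1 y := by
    rw [hQ, Measure.volume_eq_prod, setIntegral_prod]
    · exact integral_integral_swap hF1p
    · rw [← Measure.volume_eq_prod]; exact hF1i
  calc (∫ t in Set.Icc c₁ (c₁ + h), d * v (d, t) ^ 2)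
      ≤ ∫ y in Set.Icc c₁ (c₁ + h), (2 * h⁻¹ * (ρ * H0 y) + h * (ρ * H1 y)) := hstep
    _ = 2 * h⁻¹ * (ρ * ∫ x in Q, F0 x) + h * (ρ * ∫ x in Q, F1 x) := by
        rw [hsplit, hFub0, hFub1]
    _ = ρ * (2 * h⁻¹ * (∫ x in Q, F0 x) + h * (∫ x in Q, F1 x)) := by ring

end AuxWeightedTrace

/-- Weighted (axisymmetric) trace inequality on square elements: boundary integrals
weighted by the radial coordinate `x₁` are controlled by weighted interior `L²` norms
of the function and its gradient, with explicit scaling in the element size `h`. -/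

theorem weighted_trace_inequality :
    ∃ C : ℝ, 0 < C ∧ ∀ (h : ℝ), 0 < h → ∀ b : ℝ × ℝ, 0 < b.1 →
      ∀ v : ℝ × ℝ → ℝ,
        (∃ U : Set (ℝ × ℝ), IsOpen U ∧ closure (sqEl b h) ⊆ U ∧ ContDiffOn ℝ 1 v U) →
        (∫ x in frontier (sqEl b h), x.1 * (v x) ^ 2 ∂(μH[1]))
          ≤ C * ((b.1 + h) / b.1) *
            (h⁻¹ * (∫ x in sqEl b h, x.1 * (v x) ^ 2 ∂volume)
              + h * (∫ x in sqEl b h, x.1 * gradSq v x ∂volume)) := by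
  refine ⟨8, by norm_num, ?_⟩
  intro h hh b hb v ⟨U, hUopen, hUcl, hv⟩
  set a₁ := b.1 with ha₁
  set c₁ := b.2 with hc₁
  have hcl : closure (sqEl b h) = Set.Icc a₁ (a₁ + h) ×ˢ Set.Icc c₁ (c₁ + h) := by
    rw [sqEl, closure_prod_eq, closure_Ioo (by linarith : a₁ ≠ a₁ + h),
      closure_Ioo (by linarith : c₁ ≠ c₁ + h)]
  have hKU : Set.Icc a₁ (a₁ + h) ×ˢ Set.Icc c₁ (c₁ + h) ⊆ U := by rw [← hcl]; exact hUcl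
  set f : ℝ × ℝ → ℝ := fun x => x.1 * v x ^ 2 with hfdef
  set Q := sqEl b h with hQdef
  have hQ : Q = Set.Ioo a₁ (a₁ + h) ×ˢ Set.Ioo c₁ (c₁ + h) := rfl
  -- the four sides
  set S1 := Set.Icc a₁ (a₁ + h) ×ˢ ({c₁} : Set ℝ) with hS1
  set S2 := Set.Icc a₁ (a₁ + h) ×ˢ ({c₁ + h} : Set ℝ) with hS2
  set S3 := ({a₁} : Set ℝ) ×ˢ Set.Icc c₁ (c₁ + h) with hS3
  set S4 := ({a₁ + h} : Set ℝ) ×ˢ Set.Icc c₁ (c₁ + h) with hS4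
  have hfront : frontier (sqEl b h) = (S1 ∪ S2) ∪ (S3 ∪ S4) := by
    rw [sqEl, frontier_prod_eq, closure_Ioo (by linarith : a₁ ≠ a₁ + h),
      closure_Ioo (by linarith : c₁ ≠ c₁ + h),
      frontier_Ioo (by linarith : a₁ < a₁ + h), frontier_Ioo (by linarith : c₁ < c₁ + h),
      show ({c₁, c₁ + h} : Set ℝ) = {c₁} ∪ {c₁ + h} from rfl,
      show ({a₁, a₁ + h} : Set ℝ) = {a₁} ∪ {a₁ + h} from rfl,
      Set.prod_union, Set.union_prod]
  -- continuity of f on U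
  have hcv : ContinuousOn v U := hv.continuousOn
  have hfU : ContinuousOn f U := continuous_fst.continuousOn.mul (hcv.pow 2)
  have hS1U : S1 ⊆ U := by
    intro x hx
    have h2 : x.2 = c₁ := hx.2
    exact hKU ⟨hx.1, by rw [h2]; exact ⟨le_refl _, by linarith⟩⟩
  have hS2U : S2 ⊆ U := by
    intro x hx
    have h2 : x.2 = c₁ + h := hx.2
    exact hKU ⟨hx.1, by rw [h2]; exact ⟨by linarith, le_refl _⟩⟩
  have hS3U : S3 ⊆ U := by
    intro x hx
    have h1 : x.1 = a₁ := hx.1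
    exact hKU ⟨by rw [h1]; exact ⟨le_refl _, by linarith⟩, hx.2⟩
  have hS4U : S4 ⊆ U := by
    intro x hx
    have h1 : x.1 = a₁ + h := hx.1
    exact hKU ⟨by rw [h1]; exact ⟨by linarith, le_refl _⟩, hx.2⟩
  have hS1m : MeasurableSet S1 := measurableSet_Icc.prod (measurableSet_singleton _)
  have hS2m : MeasurableSet S2 := measurableSet_Icc.prod (measurableSet_singleton _)
  have hS3m : MeasurableSet S3 := (measurableSet_singleton _).prod measurableSet_Icc
  have hS4m : MeasurableSet S4 := (measurableSet_singleton _).prod measurableSet_Icc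
  have hfm1 : AEStronglyMeasurable f ((μH[1] : Measure (ℝ × ℝ)).restrict S1) :=
    (hfU.mono hS1U).aestronglyMeasurable hS1m
  have hfm2 : AEStronglyMeasurable f ((μH[1] : Measure (ℝ × ℝ)).restrict S2) :=
    (hfU.mono hS2U).aestronglyMeasurable hS2m
  have hfm3 : AEStronglyMeasurable f ((μH[1] : Measure (ℝ × ℝ)).restrict S3) :=
    (hfU.mono hS3U).aestronglyMeasurable hS3m
  have hfm4 : AEStronglyMeasurable f ((μH[1] : Measure (ℝ × ℝ)).restrict S4) :=
    (hfU.mono hS4U).aestronglyMeasurable hS4m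
  -- 1D restrictions of f are continuous, hence integrable on compact intervals
  have hcompH : ∀ d ∈ Set.Icc c₁ (c₁ + h),
      Integrable (fun t => f (t, d)) (volume.restrict (Set.Icc a₁ (a₁ + h))) := by
    intro d hd
    have hline : ContinuousOn (fun t : ℝ => ((t, d) : ℝ × ℝ)) (Set.Icc a₁ (a₁ + h)) :=
      (continuous_id.prodMk continuous_const).continuousOn
    have : ContinuousOn (fun t => f (t, d)) (Set.Icc a₁ (a₁ + h)) :=
      ContinuousOn.comp hfU hline fun t ht => hKU ⟨ht, hd⟩
    exact this.integrableOn_compact isCompact_Icc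
  have hcompV : ∀ d ∈ Set.Icc a₁ (a₁ + h),
      Integrable (fun t => f (d, t)) (volume.restrict (Set.Icc c₁ (c₁ + h))) := by
    intro d hd
    have hline : ContinuousOn (fun t : ℝ => ((d, t) : ℝ × ℝ)) (Set.Icc c₁ (c₁ + h)) :=
      (continuous_const.prodMk continuous_id).continuousOn
    have : ContinuousOn (fun t => f (d, t)) (Set.Icc c₁ (c₁ + h)) :=
      ContinuousOn.comp hfU hline fun t ht => hKU ⟨hd, ht⟩
    exact this.integrableOn_compact isCompact_Icc
  -- integrability of f on the four sides w.r.t. Hausdorff measure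
  have hint1 : Integrable f ((μH[1] : Measure (ℝ × ℝ)).restrict S1) := by
    rw [hS1, mapH c₁ measurableSet_Icc]
    refine (integrable_map_measure ?_ (isoH c₁).continuous.measurable.aemeasurable).mpr ?_
    · rw [← mapH c₁ measurableSet_Icc]; exact hfm1
    · exact hcompH c₁ ⟨le_refl _, by linarith⟩
  have hint2 : Integrable f ((μH[1] : Measure (ℝ × ℝ)).restrict S2) := by
    rw [hS2, mapH (c₁ + h) measurableSet_Icc]
    refine (integrable_map_measure ?_ (isoH (c₁ + h)).continuous.measurable.aemeasurable).mpr ?_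
    · rw [← mapH (c₁ + h) measurableSet_Icc]; exact hfm2
    · exact hcompH (c₁ + h) ⟨by linarith, le_refl _⟩
  have hint3 : Integrable f ((μH[1] : Measure (ℝ × ℝ)).restrict S3) := by
    rw [hS3, mapV a₁ measurableSet_Icc]
    refine (integrable_map_measure ?_ (isoV a₁).continuous.measurable.aemeasurable).mpr ?_
    · rw [← mapV a₁ measurableSet_Icc]; exact hfm3
    · exact hcompV a₁ ⟨le_refl _, by linarith⟩
  have hint4 : Integrable f ((μH[1] : Measure (ℝ × ℝ)).restrict S4) := by
    rw [hS4, mapV (a₁ + h) measurableSet_Icc]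
    refine (integrable_map_measure ?_ (isoV (a₁ + h)).continuous.measurable.aemeasurable).mpr ?_
    · rw [← mapV (a₁ + h) measurableSet_Icc]; exact hfm4
    · exact hcompV (a₁ + h) ⟨by linarith, le_refl _⟩
  -- split the boundary integral
  set ν : Measure (ℝ × ℝ) := ((μH[1] : Measure (ℝ × ℝ)).restrict S1
    + (μH[1] : Measure (ℝ × ℝ)).restrict S2)
    + ((μH[1] : Measure (ℝ × ℝ)).restrict S3 + (μH[1] : Measure (ℝ × ℝ)).restrict S4) with hν
  have hνle : (μH[1] : Measure (ℝ × ℝ)).restrict (frontier (sqEl b h)) ≤ ν := by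
    rw [hfront, hν]
    refine le_trans (Measure.restrict_union_le _ _) ?_
    exact add_le_add (Measure.restrict_union_le _ _) (Measure.restrict_union_le _ _)
  have hintν : Integrable f ν := ((hint1.add_measure hint2).add_measure
    (hint3.add_measure hint4))
  have hnn1 : ∀ᵐ x ∂((μH[1] : Measure (ℝ × ℝ)).restrict S1), 0 ≤ f x :=
    (ae_restrict_iff' hS1m).mpr (ae_of_all _ fun x hx =>
      mul_nonneg (le_trans hb.le hx.1.1) (sq_nonneg _))
  have hnn2 : ∀ᵐ x ∂((μH[1] : Measure (ℝ × ℝ)).restrict S2), 0 ≤ f x :=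
    (ae_restrict_iff' hS2m).mpr (ae_of_all _ fun x hx =>
      mul_nonneg (le_trans hb.le hx.1.1) (sq_nonneg _))
  have hnn3 : ∀ᵐ x ∂((μH[1] : Measure (ℝ × ℝ)).restrict S3), 0 ≤ f x :=
    (ae_restrict_iff' hS3m).mpr (ae_of_all _ fun x hx =>
      mul_nonneg (by rw [hx.1]; exact hb.le) (sq_nonneg _))
  have hnn4 : ∀ᵐ x ∂((μH[1] : Measure (ℝ × ℝ)).restrict S4), 0 ≤ f x :=
    (ae_restrict_iff' hS4m).mpr (ae_of_all _ fun x hx =>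
      mul_nonneg (by rw [hx.1]; linarith) (sq_nonneg _))
  have hnnν : 0 ≤ᵐ[ν] f := by
    rw [hν]
    exact ae_add_measure_iff.mpr ⟨ae_add_measure_iff.mpr ⟨hnn1, hnn2⟩,
      ae_add_measure_iff.mpr ⟨hnn3, hnn4⟩⟩
  have hsplit : (∫ x in frontier (sqEl b h), f x ∂(μH[1]))
      ≤ (∫ x in S1, f x ∂(μH[1])) + (∫ x in S2, f x ∂(μH[1]))
        + ((∫ x in S3, f x ∂(μH[1])) + (∫ x in S4, f x ∂(μH[1]))) := by
    have h1 : (∫ x in frontier (sqEl b h), f x ∂(μH[1])) = ∫ x, f x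
        ∂((μH[1] : Measure (ℝ × ℝ)).restrict (frontier (sqEl b h))) := rfl
    rw [h1]
    refine le_trans (integral_mono_measure hνle hnnν hintν) ?_
    rw [hν, integral_add_measure (hint1.add_measure hint2) (hint3.add_measure hint4),
      integral_add_measure hint1 hint2, integral_add_measure hint3 hint4]
  -- evaluate the four side integrals
  have hI1 : (∫ x in S1, f x ∂(μH[1])) = ∫ t in Set.Icc a₁ (a₁ + h), t * v (t, c₁) ^ 2 :=
    intH c₁ measurableSet_Icc f hfm1
  have hI2 : (∫ x in S2, f x ∂(μH[1]))
      = ∫ t in Set.Icc a₁ (a₁ + h), t * v (t, c₁ + h) ^ 2 :=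
    intH (c₁ + h) measurableSet_Icc f hfm2
  have hI3 : (∫ x in S3, f x ∂(μH[1]))
      = ∫ t in Set.Icc c₁ (c₁ + h), a₁ * v (a₁, t) ^ 2 :=
    intV a₁ measurableSet_Icc f hfm3
  have hI4 : (∫ x in S4, f x ∂(μH[1]))
      = ∫ t in Set.Icc c₁ (c₁ + h), (a₁ + h) * v (a₁ + h, t) ^ 2 :=
    intV (a₁ + h) measurableSet_Icc f hfm4
  -- interior quantities
  set A := ∫ x in Q, x.1 * v x ^ 2 with hA
  set B1 := ∫ x in Q, x.1 * (fderiv ℝ v x (1, 0)) ^ 2 with hB1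
  set B2 := ∫ x in Q, x.1 * (fderiv ℝ v x (0, 1)) ^ 2 with hB2
  have hQm : MeasurableSet Q := measurableSet_Ioo.prod measurableSet_Ioo
  have hQpos : ∀ x ∈ Q, (0:ℝ) ≤ x.1 := fun x hx => le_trans hb.le hx.1.1.le
  have hA0 : 0 ≤ A := setIntegral_nonneg hQm fun x hx =>
    mul_nonneg (hQpos x hx) (sq_nonneg _)
  have hB10 : 0 ≤ B1 := setIntegral_nonneg hQm fun x hx =>
    mul_nonneg (hQpos x hx) (sq_nonneg _)
  have hB20 : 0 ≤ B2 := setIntegral_nonneg hQm fun x hx =>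
    mul_nonneg (hQpos x hx) (sq_nonneg _)
  -- side bounds
  have hb1 := traceH hh hb hUopen hKU hv (d := c₁) ⟨le_refl _, by linarith⟩
  have hb2 := traceH hh hb hUopen hKU hv (d := c₁ + h) ⟨by linarith, le_refl _⟩
  have hb3 := traceV hh hb hUopen hKU hv (d := a₁) ⟨le_refl _, by linarith⟩
  have hb4 := traceV hh hb hUopen hKU hv (d := a₁ + h) ⟨by linarith, le_refl _⟩
  set ρ := (a₁ + h) / a₁ with hρ
  have hρ1 : 1 ≤ ρ := by
    rw [hρ, le_div_iff₀ hb]; linarith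
  -- gradient integral splits
  have hgradcont : ContinuousOn (fderiv ℝ v) U := hv.continuousOn_fderiv_of_isOpen hUopen le_rfl
  have hcd1 : ContinuousOn (fun x => fderiv ℝ v x (1, 0)) U :=
    (ContinuousLinearMap.apply ℝ ℝ ((1 : ℝ), (0 : ℝ))).continuous.comp_continuousOn hgradcont
  have hcd2 : ContinuousOn (fun x => fderiv ℝ v x (0, 1)) U :=
    (ContinuousLinearMap.apply ℝ ℝ ((0 : ℝ), (1 : ℝ))).continuous.comp_continuousOn hgradcont
  have hQK' : Q ⊆ Set.Icc a₁ (a₁ + h) ×ˢ Set.Icc c₁ (c₁ + h) :=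
    Set.prod_mono Set.Ioo_subset_Icc_self Set.Ioo_subset_Icc_self
  have hKcomp : IsCompact (Set.Icc a₁ (a₁ + h) ×ˢ Set.Icc c₁ (c₁ + h)) :=
    isCompact_Icc.prod isCompact_Icc
  have hB1int : IntegrableOn (fun x => x.1 * (fderiv ℝ v x (1, 0)) ^ 2) Q :=
    ((continuous_fst.continuousOn.mul (((hcd1.mono hKU)).pow 2)).integrableOn_compact
      hKcomp).mono_set hQK'
  have hB2int : IntegrableOn (fun x => x.1 * (fderiv ℝ v x (0, 1)) ^ 2) Q :=
    ((continuous_fst.continuousOn.mul (((hcd2.mono hKU)).pow 2)).integrableOn_compact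
      hKcomp).mono_set hQK'
  have hgrad : (∫ x in Q, x.1 * gradSq v x) = B1 + B2 := by
    have : ∀ x : ℝ × ℝ, x.1 * gradSq v x
        = x.1 * (fderiv ℝ v x (1, 0)) ^ 2 + x.1 * (fderiv ℝ v x (0, 1)) ^ 2 := by
      intro x; rw [gradSq]; ring
    simp only [this]
    rw [integral_add hB1int hB2int]
  -- put it all together
  rw [hgrad]
  have htotal : (∫ x in frontier (sqEl b h), f x ∂(μH[1]))
      ≤ (2 * h⁻¹ * A + h * B2) + (2 * h⁻¹ * A + h * B2)
        + (ρ * (2 * h⁻¹ * A + h * B1) + ρ * (2 * h⁻¹ * A + h * B1)) := by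
    refine hsplit.trans ?_
    rw [hI1, hI2, hI3, hI4]
    exact add_le_add (add_le_add hb1 hb2) (add_le_add hb3 hb4)
  refine htotal.trans ?_
  have hhinv : 0 < h⁻¹ := inv_pos.mpr hh
  nlinarith [mul_nonneg (sub_nonneg.mpr hρ1) (mul_nonneg hhinv.le hA0),
    mul_nonneg (le_trans zero_le_one hρ1) (mul_nonneg hh.le hB10),
    mul_nonneg (le_trans zero_le_one hρ1) (mul_nonneg hh.le hB20),
    mul_nonneg hh.le hB20, mul_nonneg hhinv.le hA0,
    mul_nonneg (le_trans zero_le_one hρ1) (mul_nonneg hhinv.le hA0)]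
end

section
/- There exists an absolute constant C > 0 with the following property: for every h > 0, every b = (b₁, b₂) ∈ ℝ² with b₁ > 0, and every function v : ℝ² → ℝ continuously differentiable on an open neighborhood of the closure of the square Q_h(b) = (b₁, b₁+h) × (b₂, b₂+h) and satisfying the weighted mean-zero condition ∫_{Q_h(b)} x₁ v dA = 0, one has ∫_{Q_h(b)} x₁ v² dA ≤ C · ((b₁+h)/b₁) · h² ∫_{Q_h(b)} x₁ |∇v|² dA, where dA denotes the two-dimensional Lebesgue measure. -/
open MeasureTheory

set_option maxHeartbeats 1000000

lemma cs_sq {μ : Measure ℝ} [IsFiniteMeasure μ] {f : ℝ → ℝ}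
    (hf : Integrable f μ) (hf2 : Integrable (fun x => f x ^ 2) μ) :
    (∫ x, f x ∂μ) ^ 2 ≤ (μ Set.univ).toReal * ∫ x, f x ^ 2 ∂μ := by
  set A := (μ Set.univ).toReal with hA
  set S := ∫ x, f x ∂μ with hS
  set T := ∫ x, f x ^ 2 ∂μ with hT
  have hA0 : 0 ≤ A := ENNReal.toReal_nonneg
  rcases eq_or_lt_of_le hA0 with hz | hpos
  · have : μ = 0 := by
      rw [← Measure.measure_univ_eq_zero]
      have := (measure_lt_top μ Set.univ).ne
      exact (ENNReal.toReal_eq_zero_iff _).mp hz.symm |>.resolve_right this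
    rw [hS, hT, this]
    simp
  · have h0 : 0 ≤ ∫ x, (A * f x - S) ^ 2 ∂μ := integral_nonneg fun x => sq_nonneg _
    have hexp : ∫ x, (A * f x - S) ^ 2 ∂μ = A ^ 2 * T - (2 * A * S) * S + S ^ 2 * A := by
      have h1 : (fun x => (A * f x - S) ^ 2)
          = fun x => A ^ 2 * f x ^ 2 - (2 * A * S) * f x + S ^ 2 := by
        funext x; ring
      rw [h1, integral_add (f := fun x => A ^ 2 * f x ^ 2 - 2 * A * S * f x)
          (g := fun _ => S ^ 2) ((hf2.const_mul _).sub (hf.const_mul _)) (integrable_const _),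
        integral_sub (f := fun x => A ^ 2 * f x ^ 2) (g := fun x => 2 * A * S * f x)
          (hf2.const_mul _) (hf.const_mul _), integral_const_mul, integral_const_mul,
        integral_const, measureReal_def]
      simp [smul_eq_mul, mul_comm, hA, hS, hT]
    nlinarith [h0, hexp, sq_nonneg S]

lemma closure_sqEl {b : ℝ × ℝ} {h : ℝ} (hh : 0 < h) :
    closure (sqEl b h) = Set.Icc b.1 (b.1 + h) ×ˢ Set.Icc b.2 (b.2 + h) := by
  rw [sqEl, closure_prod_eq, closure_Ioo (by linarith : b.1 ≠ b.1 + h),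
    closure_Ioo (by linarith : b.2 ≠ b.2 + h)]

lemma integ2D {b : ℝ × ℝ} {h : ℝ} (hh : 0 < h) {f : ℝ × ℝ → ℝ}
    (hf : ContinuousOn f (closure (sqEl b h))) :
    Integrable f (volume.restrict (sqEl b h)) := by
  have hc : IsCompact (closure (sqEl b h)) := by
    rw [closure_sqEl hh]; exact isCompact_Icc.prod isCompact_Icc
  exact (hf.integrableOn_compact hc).mono_set subset_closure

lemma integ1D {a h : ℝ} {g : ℝ → ℝ} (hg : ContinuousOn g (Set.Icc a (a + h))) :
    Integrable g (volume.restrict (Set.Ioo a (a + h))) :=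
  (hg.integrableOn_compact isCompact_Icc).mono_set Set.Ioo_subset_Icc_self

noncomputable def D1 (v : ℝ × ℝ → ℝ) (x : ℝ × ℝ) : ℝ := fderiv ℝ v x (1, 0)
noncomputable def D2 (v : ℝ × ℝ → ℝ) (x : ℝ × ℝ) : ℝ := fderiv ℝ v x (0, 1)

section
variable {b : ℝ × ℝ} {h : ℝ} {U : Set (ℝ × ℝ)} {v : ℝ × ℝ → ℝ}

lemma contD1 (hU : IsOpen U) (hv : ContDiffOn ℝ 1 v U) : ContinuousOn (D1 v) U := by
  have h1 : ContinuousOn (fderiv ℝ v) U := hv.continuousOn_fderiv_of_isOpen hU le_rfl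
  exact (ContinuousLinearMap.apply ℝ ℝ (((1:ℝ),(0:ℝ)))).continuous.comp_continuousOn h1

lemma contD2 (hU : IsOpen U) (hv : ContDiffOn ℝ 1 v U) : ContinuousOn (D2 v) U := by
  have h1 : ContinuousOn (fderiv ℝ v) U := hv.continuousOn_fderiv_of_isOpen hU le_rfl
  exact (ContinuousLinearMap.apply ℝ ℝ (((0:ℝ),(1:ℝ)))).continuous.comp_continuousOn h1

lemma ftc1 (hU : IsOpen U) (hUc : closure (sqEl b h) ⊆ U) (hv : ContDiffOn ℝ 1 v U)
    {x1 y1 s : ℝ} (hx : (x1, s) ∈ sqEl b h) (hy : (y1, s) ∈ sqEl b h) :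
    v (x1, s) - v (y1, s) = ∫ t in y1..x1, D1 v (t, s) := by
  have hsub : Set.uIcc y1 x1 ⊆ Set.Ioo b.1 (b.1 + h) :=
    Set.ordConnected_Ioo.uIcc_subset hy.1 hx.1
  have hmem : ∀ t ∈ Set.uIcc y1 x1, (t, s) ∈ U := fun t ht =>
    hUc (subset_closure ⟨hsub ht, hx.2⟩)
  have hderiv : ∀ t ∈ Set.uIcc y1 x1, HasDerivAt (fun t => v (t, s)) (D1 v (t, s)) t := by
    intro t ht
    have hdiff : DifferentiableAt ℝ v (t, s) :=
      (hv.contDiffAt (hU.mem_nhds (hmem t ht))).differentiableAt one_ne_zero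
    have h2 : HasDerivAt (fun t : ℝ => (t, s)) (((1:ℝ), (0:ℝ))) t :=
      (hasDerivAt_id t).prodMk (hasDerivAt_const t s)
    exact hdiff.hasFDerivAt.comp_hasDerivAt t h2
  have hint : IntervalIntegrable (fun t => D1 v (t, s)) volume y1 x1 := by
    apply ContinuousOn.intervalIntegrable
    exact (contD1 hU hv).comp ((continuous_id.prodMk continuous_const).continuousOn) hmem
  rw [intervalIntegral.integral_eq_sub_of_hasDerivAt hderiv hint]

lemma ftc2 (hU : IsOpen U) (hUc : closure (sqEl b h) ⊆ U) (hv : ContDiffOn ℝ 1 v U)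
    {x2 y2 s : ℝ} (hx : (s, x2) ∈ sqEl b h) (hy : (s, y2) ∈ sqEl b h) :
    v (s, x2) - v (s, y2) = ∫ t in y2..x2, D2 v (s, t) := by
  have hsub : Set.uIcc y2 x2 ⊆ Set.Ioo b.2 (b.2 + h) :=
    Set.ordConnected_Ioo.uIcc_subset hy.2 hx.2
  have hmem : ∀ t ∈ Set.uIcc y2 x2, (s, t) ∈ U := fun t ht =>
    hUc (subset_closure ⟨hx.1, hsub ht⟩)
  have hderiv : ∀ t ∈ Set.uIcc y2 x2, HasDerivAt (fun t => v (s, t)) (D2 v (s, t)) t := by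
    intro t ht
    have hdiff : DifferentiableAt ℝ v (s, t) :=
      (hv.contDiffAt (hU.mem_nhds (hmem t ht))).differentiableAt one_ne_zero
    have h2 : HasDerivAt (fun t : ℝ => (s, t)) (((0:ℝ), (1:ℝ))) t :=
      (hasDerivAt_const t s).prodMk (hasDerivAt_id t)
    exact hdiff.hasFDerivAt.comp_hasDerivAt t h2
  have hint : IntervalIntegrable (fun t => D2 v (s, t)) volume y2 x2 := by
    apply ContinuousOn.intervalIntegrable
    exact (contD2 hU hv).comp ((continuous_const.prodMk continuous_id).continuousOn) hmem
  rw [intervalIntegral.integral_eq_sub_of_hasDerivAt hderiv hint]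

end

lemma finite_restrict_Ioo (a c : ℝ) : IsFiniteMeasure (volume.restrict (Set.Ioo a c)) :=
  ⟨by rw [Measure.restrict_apply_univ]; exact measure_Ioo_lt_top⟩

lemma sq_intervalIntegral_le {a h : ℝ} (hh : 0 < h) {g : ℝ → ℝ}
    (hg : ContinuousOn g (Set.Icc a (a + h))) {x1 y1 : ℝ}
    (hx : x1 ∈ Set.Ioo a (a + h)) (hy : y1 ∈ Set.Ioo a (a + h)) :
    (∫ t in y1..x1, g t) ^ 2 ≤ h * ∫ t in Set.Ioo a (a + h), g t ^ 2 := by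
  haveI := finite_restrict_Ioo a (a + h)
  have hIg : Integrable (fun t => |g t|) (volume.restrict (Set.Ioo a (a + h))) :=
    (integ1D hg).abs
  have hIg2 : Integrable (fun t => |g t| ^ 2) (volume.restrict (Set.Ioo a (a + h))) := by
    simp only [sq_abs]
    exact integ1D (hg.pow 2)
  have h1 : |∫ t in y1..x1, g t| ≤ ∫ t in Set.uIoc y1 x1, |g t| := by
    simpa [Real.norm_eq_abs] using
      intervalIntegral.norm_integral_le_integral_norm_uIoc (f := g) (a := y1) (b := x1)
        (μ := volume)
  have hsub : Set.uIoc y1 x1 ⊆ Set.Ioo a (a + h) := by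
    rw [Set.uIoc]
    intro t ht
    rcases ht with ⟨h1', h2'⟩
    constructor
    · exact lt_of_lt_of_le (lt_min hy.1 hx.1) h1'.le |>.trans_le le_rfl
    · exact lt_of_le_of_lt h2' (max_lt hy.2 hx.2)
  have h2 : ∫ t in Set.uIoc y1 x1, |g t| ≤ ∫ t in Set.Ioo a (a + h), |g t| := by
    apply setIntegral_mono_set hIg
    · exact Filter.Eventually.of_forall fun t => abs_nonneg _
    · exact HasSubset.Subset.eventuallyLE hsub
  have h3 : (∫ t in Set.Ioo a (a + h), |g t|) ^ 2
      ≤ h * ∫ t in Set.Ioo a (a + h), |g t| ^ 2 := by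
    have := cs_sq hIg hIg2
    rwa [Measure.restrict_apply_univ, Real.volume_Ioo, show a + h - a = h by ring,
      ENNReal.toReal_ofReal hh.le] at this
  have h4 : |∫ t in y1..x1, g t| ≤ ∫ t in Set.Ioo a (a + h), |g t| := h1.trans h2
  have h5 : (∫ t in y1..x1, g t) ^ 2 ≤ (∫ t in Set.Ioo a (a + h), |g t|) ^ 2 := by
    rw [← sq_abs]
    exact pow_le_pow_left₀ (abs_nonneg _) h4 2
  calc (∫ t in y1..x1, g t) ^ 2 ≤ (∫ t in Set.Ioo a (a + h), |g t|) ^ 2 := h5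
    _ ≤ h * ∫ t in Set.Ioo a (a + h), |g t| ^ 2 := h3
    _ = h * ∫ t in Set.Ioo a (a + h), g t ^ 2 := by simp only [sq_abs]

lemma pointwise_bound {b : ℝ × ℝ} {h : ℝ} {U : Set (ℝ × ℝ)} {v : ℝ × ℝ → ℝ}
    (hh : 0 < h) (hU : IsOpen U) (hUc : closure (sqEl b h) ⊆ U) (hv : ContDiffOn ℝ 1 v U)
    {x y : ℝ × ℝ} (hx : x ∈ sqEl b h) (hy : y ∈ sqEl b h) :
    (v x - v y) ^ 2 ≤ 2 * h * (∫ t in Set.Ioo b.1 (b.1 + h), D1 v (t, x.2) ^ 2)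
      + 2 * h * (∫ t in Set.Ioo b.2 (b.2 + h), D2 v (y.1, t) ^ 2) := by
  obtain ⟨hx1, hx2⟩ := hx
  obtain ⟨hy1, hy2⟩ := hy
  have hmid : ((y.1, x.2) : ℝ × ℝ) ∈ sqEl b h := ⟨hy1, hx2⟩
  have hcl : closure (sqEl b h) = Set.Icc b.1 (b.1 + h) ×ˢ Set.Icc b.2 (b.2 + h) :=
    closure_sqEl hh
  have hc1 : ContinuousOn (fun t => D1 v (t, x.2)) (Set.Icc b.1 (b.1 + h)) := by
    apply (contD1 hU hv).comp ((continuous_id.prodMk continuous_const).continuousOn)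
    intro t ht
    exact hUc (by rw [hcl]; exact ⟨ht, Set.Ioo_subset_Icc_self hx2⟩)
  have hc2 : ContinuousOn (fun t => D2 v (y.1, t)) (Set.Icc b.2 (b.2 + h)) := by
    apply (contD2 hU hv).comp ((continuous_const.prodMk continuous_id).continuousOn)
    intro t ht
    exact hUc (by rw [hcl]; exact ⟨Set.Ioo_subset_Icc_self hy1, ht⟩)
  have hp : v x - v (y.1, x.2) = ∫ t in y.1..x.1, D1 v (t, x.2) :=
    ftc1 hU hUc hv (x1 := x.1) (s := x.2) ⟨hx1, hx2⟩ hmid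
  have hq : v (y.1, x.2) - v y = ∫ t in y.2..x.2, D2 v (y.1, t) :=
    ftc2 hU hUc hv (x2 := x.2) (s := y.1) hmid ⟨hy1, hy2⟩
  have hpsq : (v x - v (y.1, x.2)) ^ 2
      ≤ h * ∫ t in Set.Ioo b.1 (b.1 + h), D1 v (t, x.2) ^ 2 := by
    rw [hp]; exact sq_intervalIntegral_le hh hc1 hx1 hy1
  have hqsq : (v (y.1, x.2) - v y) ^ 2
      ≤ h * ∫ t in Set.Ioo b.2 (b.2 + h), D2 v (y.1, t) ^ 2 := by
    rw [hq]; exact sq_intervalIntegral_le hh hc2 hx2 hy2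
  nlinarith [hpsq, hqsq, sq_nonneg ((v x - v (y.1, x.2)) - (v (y.1, x.2) - v y))]

section generic
variable {α : Type*} [MeasurableSpace α] {μ : Measure α} [IsFiniteMeasure μ]

lemma integrable_sub_sq {f : α → ℝ} (hf : Integrable f μ)
    (hf2 : Integrable (fun y => f y ^ 2) μ) (c : ℝ) :
    Integrable (fun y => (c - f y) ^ 2) μ := by
  have hsplit : (fun y => (c - f y) ^ 2)
      = fun y => (c ^ 2 - (2 * c) * f y) + f y ^ 2 := funext fun y => by ring
  rw [hsplit]
  exact ((integrable_const _).sub (hf.const_mul _)).add hf2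

lemma expand_integral_sub_sq {f : α → ℝ} (hf : Integrable f μ)
    (hf2 : Integrable (fun y => f y ^ 2) μ) (c : ℝ) :
    ∫ y, (c - f y) ^ 2 ∂μ
      = (μ Set.univ).toReal * c ^ 2 - 2 * c * (∫ y, f y ∂μ) + ∫ y, f y ^ 2 ∂μ := by
  have hsplit : (fun y => (c - f y) ^ 2)
      = fun y => (c ^ 2 - (2 * c) * f y) + f y ^ 2 := funext fun y => by ring
  rw [hsplit, integral_add (f := fun y => c ^ 2 - 2 * c * f y) (g := fun y => f y ^ 2)
      ((integrable_const _).sub (hf.const_mul _)) hf2,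
    integral_sub (f := fun _ => c ^ 2) (g := fun y => 2 * c * f y)
      (integrable_const _) (hf.const_mul _), integral_const, measureReal_def, integral_const_mul, smul_eq_mul]

lemma integrable_const_add_mul {g : α → ℝ} (hg : Integrable g μ) (c d : ℝ) :
    Integrable (fun y => c + d * g y) μ :=
  (integrable_const _).add (hg.const_mul _)

lemma integral_const_add_mul {g : α → ℝ} (hg : Integrable g μ) (c d : ℝ) :
    ∫ y, (c + d * g y) ∂μ = (μ Set.univ).toReal * c + d * ∫ y, g y ∂μ := by
  rw [integral_add (f := fun _ => c) (g := fun y => d * g y) (integrable_const _)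
    (hg.const_mul _), integral_const, measureReal_def, integral_const_mul, smul_eq_mul]

lemma integrable_mul_add_const {g : α → ℝ} (hg : Integrable g μ) (c d : ℝ) :
    Integrable (fun y => d * g y + c) μ :=
  (hg.const_mul _).add (integrable_const _)

lemma integral_mul_add_const {g : α → ℝ} (hg : Integrable g μ) (c d : ℝ) :
    ∫ y, (d * g y + c) ∂μ = d * (∫ y, g y ∂μ) + (μ Set.univ).toReal * c := by
  rw [integral_add (f := fun y => d * g y) (g := fun _ => c) (hg.const_mul _)
    (integrable_const _), integral_const, measureReal_def, integral_const_mul, smul_eq_mul]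

lemma integrable_affine {f : α → ℝ} (hf : Integrable f μ)
    (hf2 : Integrable (fun y => f y ^ 2) μ) (a c d : ℝ) :
    Integrable (fun y => a * f y ^ 2 - c * f y + d) μ :=
  ((hf2.const_mul _).sub (hf.const_mul _)).add (integrable_const _)

lemma expand_integral_affine {f : α → ℝ} (hf : Integrable f μ)
    (hf2 : Integrable (fun y => f y ^ 2) μ) (a c d : ℝ) :
    ∫ y, (a * f y ^ 2 - c * f y + d) ∂μ
      = a * (∫ y, f y ^ 2 ∂μ) - c * (∫ y, f y ∂μ) + (μ Set.univ).toReal * d := by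
  rw [integral_add (f := fun y => a * f y ^ 2 - c * f y) (g := fun _ => d)
      ((hf2.const_mul _).sub (hf.const_mul _)) (integrable_const _),
    integral_sub (f := fun y => a * f y ^ 2) (g := fun y => c * f y)
      (hf2.const_mul _) (hf.const_mul _), integral_const, measureReal_def, integral_const_mul,
    integral_const_mul, smul_eq_mul]

lemma expand_integral_weighted_sub_sq {w f : α → ℝ}
    (hw : Integrable w μ) (hwf : Integrable (fun y => w y * f y) μ)
    (hwf2 : Integrable (fun y => w y * f y ^ 2) μ) (c : ℝ) :
    ∫ y, w y * (f y - c) ^ 2 ∂μ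
      = (∫ y, w y * f y ^ 2 ∂μ) - 2 * c * (∫ y, w y * f y ∂μ)
        + c ^ 2 * ∫ y, w y ∂μ := by
  have hsplit : (fun y => w y * (f y - c) ^ 2)
      = fun y => (w y * f y ^ 2 - (2 * c) * (w y * f y)) + c ^ 2 * w y :=
    funext fun y => by ring
  rw [hsplit, integral_add (f := fun y => w y * f y ^ 2 - 2 * c * (w y * f y))
      (g := fun y => c ^ 2 * w y)
      (hwf2.sub (hwf.const_mul _)) (hw.const_mul _),
    integral_sub (f := fun y => w y * f y ^ 2) (g := fun y => 2 * c * (w y * f y))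
      hwf2 (hwf.const_mul _), integral_const_mul, integral_const_mul]

lemma integrable_sub_sq' {f : α → ℝ} (hf : Integrable f μ)
    (hf2 : Integrable (fun y => f y ^ 2) μ) (c : ℝ) :
    Integrable (fun y => (f y - c) ^ 2) μ := by
  have hsplit : (fun y => (f y - c) ^ 2)
      = fun y => (f y ^ 2 - (2 * c) * f y) + c ^ 2 := funext fun y => by ring
  rw [hsplit]
  exact ((hf2.sub (hf.const_mul _))).add (integrable_const _)

lemma expand_integral_sub_sq' {f : α → ℝ} (hf : Integrable f μ)
    (hf2 : Integrable (fun y => f y ^ 2) μ) (c : ℝ) :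
    ∫ y, (f y - c) ^ 2 ∂μ
      = (∫ y, f y ^ 2 ∂μ) - 2 * c * (∫ y, f y ∂μ) + (μ Set.univ).toReal * c ^ 2 := by
  have hsplit : (fun y => (f y - c) ^ 2)
      = fun y => (f y ^ 2 - (2 * c) * f y) + c ^ 2 := funext fun y => by ring
  rw [hsplit, integral_add (f := fun y => f y ^ 2 - 2 * c * f y) (g := fun _ => c ^ 2)
      (hf2.sub (hf.const_mul _)) (integrable_const _),
    integral_sub (f := fun y => f y ^ 2) (g := fun y => 2 * c * f y)
      hf2 (hf.const_mul _), integral_const, measureReal_def, integral_const_mul, smul_eq_mul]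
  try ring

end generic

lemma restrict_sqEl_eq_prod (b : ℝ × ℝ) (h : ℝ) :
    (volume : Measure (ℝ × ℝ)).restrict (sqEl b h)
      = (volume.restrict (Set.Ioo b.1 (b.1 + h))).prod
          (volume.restrict (Set.Ioo b.2 (b.2 + h))) := by
  rw [Measure.prod_restrict, ← Measure.volume_eq_prod]
  rfl

lemma finite_restrict_sqEl (b : ℝ × ℝ) (h : ℝ) :
    IsFiniteMeasure ((volume : Measure (ℝ × ℝ)).restrict (sqEl b h)) := by
  rw [restrict_sqEl_eq_prod]
  haveI := finite_restrict_Ioo b.1 (b.1 + h)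
  haveI := finite_restrict_Ioo b.2 (b.2 + h)
  infer_instance

lemma sqEl_univ_toReal {b : ℝ × ℝ} {h : ℝ} (hh : 0 < h) :
    (((volume : Measure (ℝ × ℝ)).restrict (sqEl b h)) Set.univ).toReal = h ^ 2 := by
  rw [restrict_sqEl_eq_prod, ← Set.univ_prod_univ, Measure.prod_prod,
    Measure.restrict_apply_univ, Measure.restrict_apply_univ, Real.volume_Ioo, Real.volume_Ioo,
    show b.1 + h - b.1 = h by ring, show b.2 + h - b.2 = h by ring,
    ← ENNReal.ofReal_mul hh.le, ENNReal.toReal_ofReal (by positivity)]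
  ring


lemma poincare_core {b : ℝ × ℝ} {h : ℝ} {U : Set (ℝ × ℝ)} {v : ℝ × ℝ → ℝ}
    (hh : 0 < h) (hU : IsOpen U) (hUc : closure (sqEl b h) ⊆ U)
    (hv : ContDiffOn ℝ 1 v U) :
    h ^ 2 * (∫ x in sqEl b h, v x ^ 2 ∂volume) - (∫ x in sqEl b h, v x ∂volume) ^ 2
      ≤ h ^ 4 * ((∫ x in sqEl b h, D1 v x ^ 2 ∂volume)
          + (∫ x in sqEl b h, D2 v x ^ 2 ∂volume)) := by
  set μ1 := volume.restrict (Set.Ioo b.1 (b.1 + h)) with hμ1def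
  set μ2 := volume.restrict (Set.Ioo b.2 (b.2 + h)) with hμ2def
  set π := (volume : Measure (ℝ × ℝ)).restrict (sqEl b h) with hπdef
  have hπ : π = μ1.prod μ2 := restrict_sqEl_eq_prod b h
  haveI : IsFiniteMeasure μ1 := finite_restrict_Ioo _ _
  haveI : IsFiniteMeasure μ2 := finite_restrict_Ioo _ _
  haveI : IsFiniteMeasure π := by rw [hπ]; infer_instance
  have hμ1u : (μ1 Set.univ).toReal = h := by
    rw [hμ1def, Measure.restrict_apply_univ, Real.volume_Ioo,
      show b.1 + h - b.1 = h by ring, ENNReal.toReal_ofReal hh.le]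
  have hμ2u : (μ2 Set.univ).toReal = h := by
    rw [hμ2def, Measure.restrict_apply_univ, Real.volume_Ioo,
      show b.2 + h - b.2 = h by ring, ENNReal.toReal_ofReal hh.le]
  have hπu : (π Set.univ).toReal = h ^ 2 := by
    rw [hπ, ← Set.univ_prod_univ, Measure.prod_prod, ENNReal.toReal_mul, hμ1u, hμ2u]
    ring
  have hvc : ContinuousOn v (closure (sqEl b h)) := hv.continuousOn.mono hUc
  have hD1c : ContinuousOn (D1 v) (closure (sqEl b h)) := (contD1 hU hv).mono hUc
  have hD2c : ContinuousOn (D2 v) (closure (sqEl b h)) := (contD2 hU hv).mono hUc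
  have hIv : Integrable v π := integ2D hh hvc
  have hIv2 : Integrable (fun x => v x ^ 2) π := integ2D hh (hvc.pow 2)
  have hID1 : Integrable (fun x => D1 v x ^ 2) π := integ2D hh (hD1c.pow 2)
  have hID2 : Integrable (fun x => D2 v x ^ 2) π := integ2D hh (hD2c.pow 2)
  set S := ∫ x, v x ∂π with hS
  set T := ∫ x, v x ^ 2 ∂π with hT
  set G1 := ∫ x, D1 v x ^ 2 ∂π with hG1
  set G2 := ∫ x, D2 v x ^ 2 ∂π with hG2
  set F : ℝ → ℝ := fun s => ∫ t, D1 v (t, s) ^ 2 ∂μ1 with hF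
  set G : ℝ → ℝ := fun s => ∫ t, D2 v (s, t) ^ 2 ∂μ2 with hG
  have hID1' : Integrable (fun x => D1 v x ^ 2) (μ1.prod μ2) := by rw [hπ] at hID1; exact hID1
  have hID2' : Integrable (fun x => D2 v x ^ 2) (μ1.prod μ2) := by rw [hπ] at hID2; exact hID2
  have hIF : Integrable F μ2 := hID1'.integral_prod_right
  have hIG : Integrable G μ1 := hID2'.integral_prod_left
  have hIFcomp : Integrable (fun x : ℝ × ℝ => F x.2) π := by
    rw [hπ]
    simpa using (integrable_const (1 : ℝ) (μ := μ1)).mul_prod hIF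
  have hIGcomp : Integrable (fun x : ℝ × ℝ => G x.1) π := by
    rw [hπ]
    simpa using hIG.mul_prod (integrable_const (1 : ℝ) (μ := μ2))
  have hC1 : ∫ s, F s ∂μ2 = G1 := by
    calc ∫ s, F s ∂μ2 = ∫ t, ∫ s, D1 v (t, s) ^ 2 ∂μ2 ∂μ1 :=
          (integral_integral_swap hID1').symm
      _ = ∫ z, D1 v z ^ 2 ∂(μ1.prod μ2) := (integral_prod _ hID1').symm
      _ = G1 := by rw [← hπ]
  have hC2 : ∫ s, G s ∂μ1 = G2 := by
    calc ∫ s, G s ∂μ1 = ∫ z, D2 v z ^ 2 ∂(μ1.prod μ2) := (integral_prod _ hID2').symm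
      _ = G2 := by rw [← hπ]
  have hJF : ∫ x : ℝ × ℝ, F x.2 ∂π = h * G1 := by
    rw [hπ, integral_prod _ (by rw [← hπ]; exact hIFcomp)]
    calc ∫ _ : ℝ, (∫ s, F s ∂μ2) ∂μ1 = (μ1 Set.univ).toReal • (∫ s, F s ∂μ2) :=
          integral_const _
      _ = h * G1 := by rw [hμ1u, hC1, smul_eq_mul]
  have hJG : ∫ x : ℝ × ℝ, G x.1 ∂π = h * G2 := by
    rw [hπ, integral_prod _ (by rw [← hπ]; exact hIGcomp)]
    have hinner : ∀ s : ℝ, (∫ _ : ℝ, G s ∂μ2) = h * G s := fun s => by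
      rw [integral_const, measureReal_def, hμ2u, smul_eq_mul]
    calc ∫ s, (∫ _ : ℝ, G s ∂μ2) ∂μ1 = ∫ s, h * G s ∂μ1 := by
          simp_rw [hinner]
      _ = h * ∫ s, G s ∂μ1 := integral_const_mul _ _
      _ = h * G2 := by rw [hC2]
  set K : ℝ × ℝ → ℝ := fun x => h ^ 2 * v x ^ 2 - (2 * S) * v x + T with hKdef
  have hIK : Integrable K π := by
    simp only [hKdef]
    exact integrable_affine hIv hIv2 _ _ _
  have hKval : ∀ x : ℝ × ℝ, ∫ y, (v x - v y) ^ 2 ∂π = h ^ 2 * v x ^ 2 - 2 * v x * S + T := by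
    intro x
    rw [expand_integral_sub_sq hIv hIv2 (v x), hπu, ← hS, ← hT]
    try ring
  have hmeas : MeasurableSet (sqEl b h) := (measurableSet_Ioo.prod measurableSet_Ioo)
  have hBnd : ∀ x ∈ sqEl b h, K x ≤ 2 * h ^ 3 * F x.2 + 2 * h ^ 2 * G2 := by
    intro x hx
    have hKx : K x = ∫ y, (v x - v y) ^ 2 ∂π := by rw [hKval x, hKdef]; ring
    rw [hKx]
    have hIlhs : Integrable (fun y => (v x - v y) ^ 2) π :=
      integrable_sub_sq hIv hIv2 (v x)
    have hIrhs : Integrable (fun y : ℝ × ℝ => 2 * h * F x.2 + 2 * h * G y.1) π :=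
      integrable_const_add_mul hIGcomp _ _
    have hle : (fun y => (v x - v y) ^ 2)
        ≤ᵐ[π] fun y : ℝ × ℝ => 2 * h * F x.2 + 2 * h * G y.1 := by
      rw [hπdef]
      filter_upwards [ae_restrict_mem hmeas] with y hy
      exact pointwise_bound hh hU hUc hv hx hy
    calc ∫ y, (v x - v y) ^ 2 ∂π
        ≤ ∫ y : ℝ × ℝ, (2 * h * F x.2 + 2 * h * G y.1) ∂π :=
          integral_mono_ae hIlhs hIrhs hle
      _ = 2 * h ^ 3 * F x.2 + 2 * h ^ 2 * G2 := by
          rw [integral_const_add_mul hIGcomp (2 * h * F x.2) (2 * h), hπu, hJG]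
          ring
  have houter : ∫ x, K x ∂π ≤ ∫ x : ℝ × ℝ, (2 * h ^ 3 * F x.2 + 2 * h ^ 2 * G2) ∂π := by
    apply integral_mono_ae hIK (integrable_mul_add_const hIFcomp _ _)
    rw [hπdef]
    filter_upwards [ae_restrict_mem hmeas] with x hx
    exact hBnd x hx
  have hLHS : ∫ x, K x ∂π = 2 * h ^ 2 * T - 2 * S ^ 2 := by
    simp only [hKdef]
    rw [expand_integral_affine hIv hIv2 (h ^ 2) (2 * S) T, hπu, ← hS, ← hT]
    ring
  have hRHS : ∫ x : ℝ × ℝ, (2 * h ^ 3 * F x.2 + 2 * h ^ 2 * G2) ∂π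
      = 2 * h ^ 4 * G1 + 2 * h ^ 4 * G2 := by
    rw [integral_mul_add_const hIFcomp (2 * h ^ 2 * G2) (2 * h ^ 3), hπu, hJF]
    ring
  rw [hLHS, hRHS] at houter
  nlinarith [houter]

/-- Weighted Poincaré inequality on square elements: functions orthogonal to constants
in the `r`-weighted `L²` inner product satisfy a Poincaré inequality with constant
scaling like `h²`, up to the weight ratio `(b₁+h)/b₁`. -/
theorem weighted_poincare_inequality :
    ∃ C : ℝ, 0 < C ∧ ∀ (h : ℝ), 0 < h → ∀ b : ℝ × ℝ, 0 < b.1 →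
      ∀ v : ℝ × ℝ → ℝ,
        (∃ U : Set (ℝ × ℝ), IsOpen U ∧ closure (sqEl b h) ⊆ U ∧ ContDiffOn ℝ 1 v U) →
        (∫ x in sqEl b h, x.1 * v x ∂volume) = 0 →
        (∫ x in sqEl b h, x.1 * (v x) ^ 2 ∂volume)
          ≤ C * ((b.1 + h) / b.1) * h ^ 2 *
              (∫ x in sqEl b h, x.1 * gradSq v x ∂volume) := by
  refine ⟨1, one_pos, ?_⟩
  intro h hh b hb v hex hmean
  obtain ⟨U, hU, hUc, hv⟩ := hex
  haveI := finite_restrict_sqEl b h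
  have hπu := sqEl_univ_toReal (b := b) hh
  have hmeas : MeasurableSet (sqEl b h) := measurableSet_Ioo.prod measurableSet_Ioo
  -- continuity facts
  have hvc : ContinuousOn v (closure (sqEl b h)) := hv.continuousOn.mono hUc
  have hD1c : ContinuousOn (D1 v) (closure (sqEl b h)) := (contD1 hU hv).mono hUc
  have hD2c : ContinuousOn (D2 v) (closure (sqEl b h)) := (contD2 hU hv).mono hUc
  have hgc : ContinuousOn (gradSq v) (closure (sqEl b h)) := by
    have : ContinuousOn (fun x => D1 v x ^ 2 + D2 v x ^ 2) (closure (sqEl b h)) :=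
      (hD1c.pow 2).add (hD2c.pow 2)
    exact this
  -- integrability facts
  have hIv : Integrable v (volume.restrict (sqEl b h)) := integ2D hh hvc
  have hIv2 : Integrable (fun x => v x ^ 2) (volume.restrict (sqEl b h)) :=
    integ2D hh (hvc.pow 2)
  have hIw : Integrable (fun x : ℝ × ℝ => x.1) (volume.restrict (sqEl b h)) :=
    integ2D hh continuous_fst.continuousOn
  have hIwv : Integrable (fun x : ℝ × ℝ => x.1 * v x) (volume.restrict (sqEl b h)) :=
    integ2D hh (continuous_fst.continuousOn.mul hvc)
  have hIwv2 : Integrable (fun x : ℝ × ℝ => x.1 * v x ^ 2) (volume.restrict (sqEl b h)) :=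
    integ2D hh (continuous_fst.continuousOn.mul (hvc.pow 2))
  have hID1 : Integrable (fun x => D1 v x ^ 2) (volume.restrict (sqEl b h)) :=
    integ2D hh (hD1c.pow 2)
  have hID2 : Integrable (fun x => D2 v x ^ 2) (volume.restrict (sqEl b h)) :=
    integ2D hh (hD2c.pow 2)
  have hIg : Integrable (gradSq v) (volume.restrict (sqEl b h)) := integ2D hh hgc
  have hIwg : Integrable (fun x : ℝ × ℝ => x.1 * gradSq v x) (volume.restrict (sqEl b h)) :=
    integ2D hh (continuous_fst.continuousOn.mul hgc)
  -- the Poincaré core inequality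
  have core := poincare_core hh hU hUc hv
  have hGsplit : (∫ x in sqEl b h, gradSq v x ∂volume)
      = (∫ x in sqEl b h, D1 v x ^ 2 ∂volume) + ∫ x in sqEl b h, D2 v x ^ 2 ∂volume :=
    integral_add hID1 hID2
  rw [← hGsplit] at core
  -- abbreviations
  set S := ∫ x in sqEl b h, v x ∂volume with hS
  set T := ∫ x in sqEl b h, v x ^ 2 ∂volume with hT
  set GG := ∫ x in sqEl b h, gradSq v x ∂volume with hGG
  set W := ∫ x in sqEl b h, x.1 * v x ^ 2 ∂volume with hW
  set R := ∫ x in sqEl b h, x.1 * gradSq v x ∂volume with hR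
  set m := S / h ^ 2 with hm
  have hgnn : ∀ x, 0 ≤ gradSq v x := fun x => add_nonneg (sq_nonneg _) (sq_nonneg _)
  have hwpos : 0 ≤ ∫ x in sqEl b h, x.1 ∂volume := by
    apply integral_nonneg_of_ae
    filter_upwards [ae_restrict_mem hmeas] with x hx
    exact (hb.trans hx.1.1).le
  have hGGnn : 0 ≤ GG := by
    rw [hGG]; exact integral_nonneg fun x => hgnn x
  have hRnn : 0 ≤ R := by
    rw [hR]
    apply integral_nonneg_of_ae
    filter_upwards [ae_restrict_mem hmeas] with x hx
    exact mul_nonneg (hb.trans hx.1.1).le (hgnn x)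
  -- Step 1: W ≤ ∫ x.1 (v-m)²
  have step1 : W ≤ ∫ x in sqEl b h, x.1 * (v x - m) ^ 2 ∂volume := by
    have hexp := expand_integral_weighted_sub_sq (w := fun x : ℝ × ℝ => x.1) (f := v)
      hIw hIwv hIwv2 m
    rw [hexp, hmean, ← hW]
    have h1 : (0:ℝ) ≤ m ^ 2 * ∫ x in sqEl b h, x.1 ∂volume :=
      mul_nonneg (sq_nonneg m) hwpos
    linarith
  -- Step 2: weight bounded by b.1 + h
  have step2 : (∫ x in sqEl b h, x.1 * (v x - m) ^ 2 ∂volume)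
      ≤ (b.1 + h) * ∫ x in sqEl b h, (v x - m) ^ 2 ∂volume := by
    have hIa : Integrable (fun x : ℝ × ℝ => x.1 * (v x - m) ^ 2)
        (volume.restrict (sqEl b h)) :=
      integ2D hh (continuous_fst.continuousOn.mul ((hvc.sub continuousOn_const).pow 2))
    have hIb : Integrable (fun x : ℝ × ℝ => (b.1 + h) * (v x - m) ^ 2)
        (volume.restrict (sqEl b h)) :=
      (integrable_sub_sq' hIv hIv2 m).const_mul _
    have hmono : (∫ x in sqEl b h, x.1 * (v x - m) ^ 2 ∂volume)
        ≤ ∫ x in sqEl b h, (b.1 + h) * (v x - m) ^ 2 ∂volume := by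
      apply integral_mono_ae hIa hIb
      filter_upwards [ae_restrict_mem hmeas] with x hx
      exact mul_le_mul_of_nonneg_right hx.1.2.le (sq_nonneg _)
    rwa [integral_const_mul] at hmono
  -- Step 3: expansion of the unweighted square
  have step3 : (∫ x in sqEl b h, (v x - m) ^ 2 ∂volume) = T - 2 * m * S + h ^ 2 * m ^ 2 := by
    rw [expand_integral_sub_sq' hIv hIv2 m, hπu, ← hS, ← hT]
  -- Step 4: Poincaré on the mean-shifted function
  have step4 : T - 2 * m * S + h ^ 2 * m ^ 2 ≤ h ^ 2 * GG := by
    have hkey : h ^ 2 * (T - 2 * m * S + h ^ 2 * m ^ 2) = h ^ 2 * T - S ^ 2 := by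
      rw [hm]; field_simp; ring
    have h2pos : (0:ℝ) < h ^ 2 := by positivity
    have := core
    nlinarith [this, hkey, h2pos]
  -- Step 5: weight from below on the gradient side
  have step5 : b.1 * GG ≤ R := by
    have hmono : (∫ x in sqEl b h, b.1 * gradSq v x ∂volume)
        ≤ ∫ x in sqEl b h, x.1 * gradSq v x ∂volume := by
      apply integral_mono_ae (hIg.const_mul _) hIwg
      filter_upwards [ae_restrict_mem hmeas] with x hx
      exact mul_le_mul_of_nonneg_right hx.1.1.le (hgnn x)
    rwa [integral_const_mul, ← hGG, ← hR] at hmono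
  -- combine everything
  have hchain : W ≤ (b.1 + h) * (h ^ 2 * GG) := by
    calc W ≤ ∫ x in sqEl b h, x.1 * (v x - m) ^ 2 ∂volume := step1
      _ ≤ (b.1 + h) * ∫ x in sqEl b h, (v x - m) ^ 2 ∂volume := step2
      _ = (b.1 + h) * (T - 2 * m * S + h ^ 2 * m ^ 2) := by rw [step3]
      _ ≤ (b.1 + h) * (h ^ 2 * GG) := by
          apply mul_le_mul_of_nonneg_left step4 (by linarith)
  rw [one_mul, div_mul_eq_mul_div, div_mul_eq_mul_div]
  rw [le_div_iff₀ hb]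
  nlinarith [hchain, step5, mul_le_mul_of_nonneg_right hchain hb.le,
    mul_le_mul_of_nonneg_left step5 (mul_nonneg (by linarith : (0:ℝ) ≤ b.1 + h)
      (by positivity : (0:ℝ) ≤ h ^ 2))]
end

section
/- There exists an absolute constant c > 0 with the following property: for every h > 0, every b = (b₁, b₂) ∈ ℝ² with b₁ > 0, and every affine map v : ℝ² → ℝ² (both components polynomials of total degree at most 1), the boundary stabilization satisfies the lower bound h⁻¹ ∫_{∂Q_h(b)} 2π x₁ |v|² dH¹ ≥ c ρ⁻¹ ∫_{Q_h(b)} x₁ |∇v|² dA, where Q_h(b) = (b₁, b₁+h) × (b₂, b₂+h), ρ = (b₁+h)/b₁, ∂Q_h(b) carries the one-dimensional Hausdorff measure H¹, |∇v|² is the sum of the squared Euclidean norms of the gradients of the two components, and dA is the two-dimensional Lebesgue measure. -/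
open MeasureTheory Real

lemma iso_horiz (t : ℝ) : Isometry (fun u : ℝ => (u, t)) := fun x y => by
  simp [Prod.edist_eq]

lemma iso_vert (s : ℝ) : Isometry (fun u : ℝ => (s, u)) := fun x y => by
  simp [Prod.edist_eq]

lemma iso_setIntegral {f : ℝ → ℝ × ℝ} (hf : Isometry f) {s : Set ℝ} (hs : MeasurableSet s)
    (g : ℝ × ℝ → ℝ) :
    ∫ x in f '' s, g x ∂(μH[1] : Measure (ℝ × ℝ)) = ∫ u in s, g (f u) := by
  have hemb : MeasurableEmbedding f := hf.isClosedEmbedding.measurableEmbedding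
  have himg : MeasurableSet (f '' s) := hemb.measurableSet_image.2 hs
  have hmap : Measure.map f (volume : Measure ℝ)
      = (μH[1] : Measure (ℝ × ℝ)).restrict (Set.range f) := by
    rw [← MeasureTheory.hausdorffMeasure_real]
    exact hf.map_hausdorffMeasure (Or.inl one_pos.le)
  have hres : (μH[1] : Measure (ℝ × ℝ)).restrict (f '' s) = Measure.map f (volume.restrict s) := by
    have h1 : ((μH[1] : Measure (ℝ × ℝ)).restrict (Set.range f)).restrict (f '' s)
        = (μH[1] : Measure (ℝ × ℝ)).restrict (f '' s) := by
      rw [Measure.restrict_restrict himg, Set.inter_eq_left.2 (Set.image_subset_range f s)]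
    rw [← h1, ← hmap, Measure.restrict_map hemb.measurable himg,
      Set.preimage_image_eq s hemb.injective]
  rw [hres, hemb.integral_map]

lemma quad_int (a h c m : ℝ) :
    ∫ u in a..(a + h), (c + m * u) ^ 2
      = c ^ 2 * h + c * m * ((a + h) ^ 2 - a ^ 2) + m ^ 2 * ((a + h) ^ 3 - a ^ 3) / 3 := by
  have key : ∀ u ∈ Set.uIcc a (a + h),
      HasDerivAt (fun u => c ^ 2 * u + c * m * u ^ 2 + m ^ 2 * u ^ 3 / 3) ((c + m * u) ^ 2) u := by
    intro u _
    have h1 : HasDerivAt (fun u : ℝ => u) 1 u := hasDerivAt_id u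
    have h2 := hasDerivAt_pow 2 u
    have h3 := hasDerivAt_pow 3 u
    have := ((h1.const_mul (c ^ 2)).add (h2.const_mul (c * m))).add
      ((h3.const_mul (m ^ 2)).div_const 3)
    convert (show HasDerivAt (fun u => c ^ 2 * u + c * m * u ^ 2 + m ^ 2 * u ^ 3 / 3) _ u from this) using 1
    push_cast
    ring
  rw [intervalIntegral.integral_eq_sub_of_hasDerivAt key
    (Continuous.intervalIntegrable (by continuity) _ _)]
  ring

lemma corner (s t h a₀ a₁ a₂ : ℝ) (hh : 0 < h) :
    (a₁ ^ 2 + a₂ ^ 2) * h ^ 3 / 12 ≤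
      ((a₀ + a₂ * t) ^ 2 * h + (a₀ + a₂ * t) * a₁ * ((s + h) ^ 2 - s ^ 2)
          + a₁ ^ 2 * ((s + h) ^ 3 - s ^ 3) / 3)
      + ((a₀ + a₁ * s) ^ 2 * h + (a₀ + a₁ * s) * a₂ * ((t + h) ^ 2 - t ^ 2)
          + a₂ ^ 2 * ((t + h) ^ 3 - t ^ 3) / 3) := by
  nlinarith [mul_nonneg hh.le (sq_nonneg (4 * (a₀ + a₁ * s + a₂ * t) + (a₁ + a₂) * h)),
    mul_nonneg (mul_nonneg (mul_nonneg hh.le hh.le) hh.le) (sq_nonneg (a₁ - a₂))]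

lemma gradSq_affine (a₀ a₁ a₂ : ℝ) (x : ℝ × ℝ) :
    gradSq (fun y : ℝ × ℝ => a₀ + a₁ * y.1 + a₂ * y.2) x = a₁ ^ 2 + a₂ ^ 2 := by
  have h1 : HasFDerivAt (fun y : ℝ × ℝ => y.1) (ContinuousLinearMap.fst ℝ ℝ ℝ) x := hasFDerivAt_fst
  have h2 : HasFDerivAt (fun y : ℝ × ℝ => y.2) (ContinuousLinearMap.snd ℝ ℝ ℝ) x := hasFDerivAt_snd
  have hd := ((hasFDerivAt_const a₀ x).add (h1.const_mul a₁)).add (h2.const_mul a₂)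
  rw [gradSq, (show HasFDerivAt (fun y : ℝ × ℝ => a₀ + a₁ * y.1 + a₂ * y.2) _ x from hd).fderiv]
  simp

lemma edge_measure {f : ℝ → ℝ × ℝ} (hf : Isometry f) (a c : ℝ) :
    (μH[1] : Measure (ℝ × ℝ)) (f '' Set.Icc a c) = ENNReal.ofReal (c - a) := by
  rw [hf.hausdorffMeasure_image (Or.inl one_pos.le), MeasureTheory.hausdorffMeasure_real,
    Real.volume_Icc]

lemma horiz_seg (a c d : ℝ) :
    Set.Icc a c ×ˢ ({d} : Set ℝ) = (fun u : ℝ => (u, d)) '' Set.Icc a c := by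
  ext ⟨x, y⟩
  constructor
  · rintro ⟨hx, hy⟩
    exact ⟨x, hx, by simp_all⟩
  · rintro ⟨u, hu, huv⟩
    rw [Prod.ext_iff] at huv
    obtain ⟨h1, h2⟩ := huv
    exact ⟨h1 ▸ hu, h2 ▸ rfl⟩

lemma vert_seg (a c d : ℝ) :
    ({d} : Set ℝ) ×ˢ Set.Icc a c = (fun u : ℝ => (d, u)) '' Set.Icc a c := by
  ext ⟨x, y⟩
  constructor
  · rintro ⟨hx, hy⟩
    exact ⟨y, hy, by simp_all⟩
  · rintro ⟨u, hu, huv⟩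
    rw [Prod.ext_iff] at huv
    obtain ⟨h1, h2⟩ := huv
    exact ⟨h1 ▸ rfl, h2 ▸ hu⟩

set_option maxHeartbeats 1000000 in
/-- Lower bound of the stabilization norm-equivalence, for affine vector fields on
square elements: the boundary stabilization dominates the weighted energy seminorm
up to the inverse weight ratio, with constant independent of `h` and `b`. -/
theorem stabilization_lower_bound :
    ∃ c : ℝ, 0 < c ∧ ∀ (h : ℝ), 0 < h → ∀ b : ℝ × ℝ, 0 < b.1 →
      ∀ v : ℝ × ℝ → ℝ × ℝ,
        (∃ a₀ a₁ a₂ c₀ c₁ c₂ : ℝ,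
            v = fun x => (a₀ + a₁ * x.1 + a₂ * x.2, c₀ + c₁ * x.1 + c₂ * x.2)) →
        h⁻¹ * (∫ x in frontier (sqEl b h),
            2 * π * x.1 * ((v x).1 ^ 2 + (v x).2 ^ 2) ∂(μH[1]))
          ≥ c * ((b.1 + h) / b.1)⁻¹ *
            (∫ x in sqEl b h,
              x.1 * (gradSq (fun y => (v y).1) x + gradSq (fun y => (v y).2) x) ∂volume) := by
  refine ⟨1/2, by norm_num, ?_⟩
  intro h hh b hb v hv
  obtain ⟨a₀, a₁, a₂, c₀, c₁, c₂, rfl⟩ := hv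
  obtain ⟨s, t⟩ := b
  simp only [sqEl] at *
  set Q : Set (ℝ × ℝ) := Set.Ioo s (s + h) ×ˢ Set.Ioo t (t + h) with hQ
  set g : ℝ × ℝ → ℝ := fun x =>
    2 * π * x.1 * ((a₀ + a₁ * x.1 + a₂ * x.2) ^ 2 + (c₀ + c₁ * x.1 + c₂ * x.2) ^ 2) with hgdef
  have hsh : s < s + h := by linarith
  have hth : t < t + h := by linarith
  have hgc : Continuous g := by rw [hgdef]; fun_prop
  have hFmeas : MeasurableSet (frontier Q) := isClosed_frontier.measurableSet
  have hclosQ : closure Q = Set.Icc s (s + h) ×ˢ Set.Icc t (t + h) := by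
    rw [hQ, closure_prod_eq, closure_Ioo hsh.ne, closure_Ioo hth.ne]
  have hFclos : frontier Q ⊆ Set.Icc s (s + h) ×ˢ Set.Icc t (t + h) := by
    rw [← hclosQ]; exact frontier_subset_closure
  have hFeq : frontier Q
      = Set.Icc s (s + h) ×ˢ ({t, t + h} : Set ℝ)
        ∪ ({s, s + h} : Set ℝ) ×ˢ Set.Icc t (t + h) := by
    rw [hQ, frontier_prod_eq, closure_Ioo hsh.ne, closure_Ioo hth.ne,
      frontier_Ioo hsh, frontier_Ioo hth]
  set Bot : Set (ℝ × ℝ) := (fun u : ℝ => (u, t)) '' Set.Icc s (s + h) with hBot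
  set Top : Set (ℝ × ℝ) := (fun u : ℝ => (u, t + h)) '' Set.Icc s (s + h) with hTop
  set LftC : Set (ℝ × ℝ) := (fun u : ℝ => (s, u)) '' Set.Icc t (t + h) with hLftC
  set Rgt : Set (ℝ × ℝ) := (fun u : ℝ => (s + h, u)) '' Set.Icc t (t + h) with hRgt
  set Lft : Set (ℝ × ℝ) := (fun u : ℝ => (s, u)) '' Set.Ioc t (t + h) with hLft
  have hFeq2 : frontier Q = (Bot ∪ Top) ∪ (LftC ∪ Rgt) := by
    rw [hFeq]
    congr 1
    · rw [show ({t, t + h} : Set ℝ) = {t} ∪ {t + h} from Set.insert_eq t {t + h},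
        Set.prod_union, horiz_seg, horiz_seg]
    · rw [show ({s, s + h} : Set ℝ) = {s} ∪ {s + h} from Set.insert_eq s {s + h},
        Set.union_prod, vert_seg, vert_seg]
  have hFfin : (μH[1] : Measure (ℝ × ℝ)) (frontier Q) ≠ ⊤ := by
    rw [hFeq2]
    refine ne_of_lt (lt_of_le_of_lt ((measure_union_le _ _).trans
      (add_le_add (measure_union_le _ _) (measure_union_le _ _))) ?_)
    rw [hBot, hTop, hLftC, hRgt, edge_measure (iso_horiz t), edge_measure (iso_horiz (t + h)),
      edge_measure (iso_vert s), edge_measure (iso_vert (s + h))]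
    exact ENNReal.add_lt_top.2 ⟨ENNReal.add_lt_top.2 ⟨ENNReal.ofReal_lt_top, ENNReal.ofReal_lt_top⟩,
      ENNReal.add_lt_top.2 ⟨ENNReal.ofReal_lt_top, ENNReal.ofReal_lt_top⟩⟩
  have hIcc : IsCompact (Set.Icc s (s + h) ×ˢ Set.Icc t (t + h)) :=
    isCompact_Icc.prod isCompact_Icc
  have hFcomp : IsCompact (frontier Q) := hIcc.of_isClosed_subset isClosed_frontier hFclos
  obtain ⟨C, hC⟩ := hFcomp.exists_bound_of_continuousOn hgc.continuousOn
  have hgInt : IntegrableOn g (frontier Q) μH[1] :=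
    Measure.integrableOn_of_bounded hFfin hgc.aestronglyMeasurable
      ((ae_restrict_iff' hFmeas).2 (ae_of_all _ hC))
  have hpos : 0 ≤ᵐ[(μH[1] : Measure (ℝ × ℝ)).restrict (frontier Q)] g := by
    refine (ae_restrict_iff' hFmeas).2 (ae_of_all _ fun x hx => ?_)
    have hx1 : (0 : ℝ) ≤ x.1 := le_trans hb.le (hFclos hx).1.1
    rw [hgdef]
    have : (0:ℝ) ≤ (a₀ + a₁ * x.1 + a₂ * x.2) ^ 2 + (c₀ + c₁ * x.1 + c₂ * x.2) ^ 2 := by positivity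
    have h2π : (0:ℝ) ≤ 2 * π := by positivity
    exact mul_nonneg (mul_nonneg h2π hx1) this
  have hBotsub : Bot ⊆ frontier Q := by
    rw [hFeq2]
    exact Set.subset_union_left.trans Set.subset_union_left
  have hLftsub : Lft ⊆ frontier Q := by
    rw [hFeq2, hLft]
    exact (Set.image_mono Set.Ioc_subset_Icc_self).trans
      (Set.subset_union_left.trans Set.subset_union_right)
  have hLftmeas : MeasurableSet Lft :=
    ((iso_vert s).isClosedEmbedding.measurableEmbedding.measurableSet_image).2 measurableSet_Ioc
  have hdisj : Disjoint Bot Lft := by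
    rw [Set.disjoint_left]
    rintro ⟨x, y⟩ ⟨u, hu, huv⟩ ⟨w, hw, hwv⟩
    rw [Prod.ext_iff] at huv hwv
    have h1 : t = y := huv.2
    have h2 : w = y := hwv.2
    have h3 : t < w := hw.1
    linarith [h1, h2, h3]
  have hmono : ∫ x in Bot ∪ Lft, g x ∂μH[1] ≤ ∫ x in frontier Q, g x ∂μH[1] :=
    setIntegral_mono_set hgInt hpos
      (HasSubset.Subset.eventuallyLE (Set.union_subset hBotsub hLftsub))
  have hsplit : ∫ x in Bot ∪ Lft, g x ∂μH[1]
      = (∫ x in Bot, g x ∂μH[1]) + ∫ x in Lft, g x ∂μH[1] :=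
    setIntegral_union hdisj hLftmeas (hgInt.mono_set hBotsub) (hgInt.mono_set hLftsub)
  have hBotInt : ∫ x in Bot, g x ∂μH[1] = ∫ u in Set.Icc s (s + h), g (u, t) :=
    iso_setIntegral (iso_horiz t) measurableSet_Icc g
  have hLftInt : ∫ x in Lft, g x ∂μH[1] = ∫ u in Set.Ioc t (t + h), g (s, u) :=
    iso_setIntegral (iso_vert s) measurableSet_Ioc g
  -- closed-form values
  set Vb : ℝ :=
    ((a₀ + a₂ * t) ^ 2 * h + (a₀ + a₂ * t) * a₁ * ((s + h) ^ 2 - s ^ 2)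
        + a₁ ^ 2 * ((s + h) ^ 3 - s ^ 3) / 3)
    + ((c₀ + c₂ * t) ^ 2 * h + (c₀ + c₂ * t) * c₁ * ((s + h) ^ 2 - s ^ 2)
        + c₁ ^ 2 * ((s + h) ^ 3 - s ^ 3) / 3) with hVb
  set Vl : ℝ :=
    ((a₀ + a₁ * s) ^ 2 * h + (a₀ + a₁ * s) * a₂ * ((t + h) ^ 2 - t ^ 2)
        + a₂ ^ 2 * ((t + h) ^ 3 - t ^ 3) / 3)
    + ((c₀ + c₁ * s) ^ 2 * h + (c₀ + c₁ * s) * c₂ * ((t + h) ^ 2 - t ^ 2)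
        + c₂ ^ 2 * ((t + h) ^ 3 - t ^ 3) / 3) with hVl
  have hquadb : ∫ u in s..(s + h),
      ((a₀ + a₁ * u + a₂ * t) ^ 2 + (c₀ + c₁ * u + c₂ * t) ^ 2) = Vb := by
    rw [intervalIntegral.integral_add (Continuous.intervalIntegrable (by fun_prop) _ _)
      (Continuous.intervalIntegrable (by fun_prop) _ _)]
    rw [show (fun u : ℝ => (a₀ + a₁ * u + a₂ * t) ^ 2)
        = fun u : ℝ => (a₀ + a₂ * t + a₁ * u) ^ 2 from funext fun u => by ring]
    rw [show (fun u : ℝ => (c₀ + c₁ * u + c₂ * t) ^ 2)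
        = fun u : ℝ => (c₀ + c₂ * t + c₁ * u) ^ 2 from funext fun u => by ring]
    rw [quad_int s h (a₀ + a₂ * t) a₁, quad_int s h (c₀ + c₂ * t) c₁, hVb]
  have hquadl : ∫ u in t..(t + h),
      ((a₀ + a₁ * s + a₂ * u) ^ 2 + (c₀ + c₁ * s + c₂ * u) ^ 2) = Vl := by
    rw [intervalIntegral.integral_add (Continuous.intervalIntegrable (by fun_prop) _ _)
      (Continuous.intervalIntegrable (by fun_prop) _ _)]
    rw [quad_int t h (a₀ + a₁ * s) a₂, quad_int t h (c₀ + c₁ * s) c₂, hVl]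
  -- bottom edge lower bound
  have f2 : 2 * π * s * Vb ≤ ∫ x in Bot, g x ∂μH[1] := by
    rw [hBotInt]
    have step1 : ∫ u in Set.Icc s (s + h),
        (2 * π * s) * ((a₀ + a₁ * u + a₂ * t) ^ 2 + (c₀ + c₁ * u + c₂ * t) ^ 2)
        ≤ ∫ u in Set.Icc s (s + h), g (u, t) := by
      refine setIntegral_mono_on (Continuous.integrableOn_Icc (by fun_prop))
        (Continuous.integrableOn_Icc (by rw [hgdef]; fun_prop)) measurableSet_Icc ?_
      intro u hu
      rw [hgdef]
      have hX : (0:ℝ) ≤ (a₀ + a₁ * u + a₂ * t) ^ 2 + (c₀ + c₁ * u + c₂ * t) ^ 2 := by positivity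
      exact mul_le_mul_of_nonneg_right
        (mul_le_mul_of_nonneg_left hu.1 (by positivity)) hX
    have step2 : ∫ u in Set.Icc s (s + h),
        (2 * π * s) * ((a₀ + a₁ * u + a₂ * t) ^ 2 + (c₀ + c₁ * u + c₂ * t) ^ 2)
        = 2 * π * s * Vb := by
      rw [MeasureTheory.integral_const_mul, MeasureTheory.integral_Icc_eq_integral_Ioc,
        ← intervalIntegral.integral_of_le hsh.le, hquadb]
    linarith [step1, step2]
  -- left edge value
  have f3 : 2 * π * s * Vl ≤ ∫ x in Lft, g x ∂μH[1] := by
    rw [hLftInt]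
    have : ∫ u in Set.Ioc t (t + h), g (s, u)
        = ∫ u in Set.Ioc t (t + h),
            (2 * π * s) * ((a₀ + a₁ * s + a₂ * u) ^ 2 + (c₀ + c₁ * s + c₂ * u) ^ 2) := by
      rw [hgdef]
    rw [this, MeasureTheory.integral_const_mul, ← intervalIntegral.integral_of_le hth.le, hquadl]
  -- combine to frontier lower bound
  have hK0 : (0:ℝ) ≤ a₁ ^ 2 + a₂ ^ 2 + (c₁ ^ 2 + c₂ ^ 2) := by positivity
  have hcorner : (a₁ ^ 2 + a₂ ^ 2 + (c₁ ^ 2 + c₂ ^ 2)) * h ^ 3 / 12 ≤ Vb + Vl := by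
    have h1 := corner s t h a₀ a₁ a₂ hh
    have h2 := corner s t h c₀ c₁ c₂ hh
    rw [hVb, hVl]
    linarith [h1, h2]
  clear_value Vb Vl
  have hIF : 2 * π * s * ((a₁ ^ 2 + a₂ ^ 2 + (c₁ ^ 2 + c₂ ^ 2)) * h ^ 3 / 12)
      ≤ ∫ x in frontier Q, g x ∂μH[1] := by
    have hmul : 2 * π * s * ((a₁ ^ 2 + a₂ ^ 2 + (c₁ ^ 2 + c₂ ^ 2)) * h ^ 3 / 12)
        ≤ 2 * π * s * (Vb + Vl) :=
      mul_le_mul_of_nonneg_left hcorner (by positivity)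
    calc 2 * π * s * ((a₁ ^ 2 + a₂ ^ 2 + (c₁ ^ 2 + c₂ ^ 2)) * h ^ 3 / 12)
        ≤ 2 * π * s * (Vb + Vl) := hmul
      _ = 2 * π * s * Vb + 2 * π * s * Vl := by ring
      _ ≤ (∫ x in Bot, g x ∂μH[1]) + ∫ x in Lft, g x ∂μH[1] := add_le_add f2 f3
      _ = ∫ x in Bot ∪ Lft, g x ∂μH[1] := hsplit.symm
      _ ≤ ∫ x in frontier Q, g x ∂μH[1] := hmono
  -- RHS bound
  have hRW : (fun x : ℝ × ℝ => x.1 * (gradSq (fun y => a₀ + a₁ * y.1 + a₂ * y.2) x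
        + gradSq (fun y => c₀ + c₁ * y.1 + c₂ * y.2) x))
      = fun x : ℝ × ℝ => x.1 * (a₁ ^ 2 + a₂ ^ 2 + (c₁ ^ 2 + c₂ ^ 2)) := by
    funext x
    rw [gradSq_affine, gradSq_affine]
  have hvolQ : volume Q = ENNReal.ofReal h * ENNReal.ofReal h := by
    rw [hQ, Measure.volume_eq_prod, Measure.prod_prod, Real.volume_Ioo, Real.volume_Ioo,
      add_sub_cancel_left, add_sub_cancel_left]
  have hRbound : (∫ x in Q, x.1 * (a₁ ^ 2 + a₂ ^ 2 + (c₁ ^ 2 + c₂ ^ 2)) ∂volume)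
      ≤ (s + h) * (a₁ ^ 2 + a₂ ^ 2 + (c₁ ^ 2 + c₂ ^ 2)) * (h * h) := by
    have hint : IntegrableOn (fun x : ℝ × ℝ => x.1 * (a₁ ^ 2 + a₂ ^ 2 + (c₁ ^ 2 + c₂ ^ 2)))
        Q volume :=
      ((Continuous.continuousOn (by fun_prop)).integrableOn_compact hIcc).mono_set
        (Set.prod_mono Set.Ioo_subset_Icc_self Set.Ioo_subset_Icc_self)
    have hcint : IntegrableOn (fun _ : ℝ × ℝ => (s + h) * (a₁ ^ 2 + a₂ ^ 2 + (c₁ ^ 2 + c₂ ^ 2)))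
        Q volume := by
      refine integrableOn_const ?_
      rw [hvolQ]
      exact (ENNReal.mul_lt_top ENNReal.ofReal_lt_top ENNReal.ofReal_lt_top).ne
    have hmono2 : (∫ x in Q, x.1 * (a₁ ^ 2 + a₂ ^ 2 + (c₁ ^ 2 + c₂ ^ 2)) ∂volume)
        ≤ ∫ _x in Q, (s + h) * (a₁ ^ 2 + a₂ ^ 2 + (c₁ ^ 2 + c₂ ^ 2)) ∂volume := by
      refine setIntegral_mono_on hint hcint (measurableSet_Ioo.prod measurableSet_Ioo) ?_
      intro x hx
      exact mul_le_mul_of_nonneg_right (le_of_lt hx.1.2) hK0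
    have hconst : (∫ _x in Q, (s + h) * (a₁ ^ 2 + a₂ ^ 2 + (c₁ ^ 2 + c₂ ^ 2)) ∂volume)
        = (s + h) * (a₁ ^ 2 + a₂ ^ 2 + (c₁ ^ 2 + c₂ ^ 2)) * (h * h) := by
      rw [setIntegral_const, measureReal_def, hvolQ, ENNReal.toReal_mul, ENNReal.toReal_ofReal hh.le,
        smul_eq_mul]
      ring
    linarith [hmono2, hconst]
  -- final assembly
  rw [ge_iff_le, hRW]
  set K : ℝ := a₁ ^ 2 + a₂ ^ 2 + (c₁ ^ 2 + c₂ ^ 2) with hKdef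
  set R : ℝ := ∫ x in Q, x.1 * K ∂volume with hR
  set IF : ℝ := ∫ x in frontier Q, g x ∂μH[1] with hIFdef
  clear_value K R IF
  have hsh0 : (0:ℝ) < s + h := by linarith
  calc 1 / 2 * ((s + h) / s)⁻¹ * R
      ≤ 1 / 2 * ((s + h) / s)⁻¹ * ((s + h) * K * (h * h)) := by
        refine mul_le_mul_of_nonneg_left hRbound ?_
        rw [inv_div]
        positivity
    _ = s * K * h ^ 2 / 2 := by
        rw [inv_div]
        field_simp
    _ ≤ π * s * K * h ^ 2 / 6 := by
        have : (0:ℝ) ≤ (π - 3) * (s * K * h ^ 2) :=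
          mul_nonneg (by linarith [pi_gt_three]) (by positivity)
        nlinarith [this]
    _ = h⁻¹ * (2 * π * s * (K * h ^ 3 / 12)) := by
        field_simp
        ring
    _ ≤ h⁻¹ * IF := by
        refine mul_le_mul_of_nonneg_left ?_ (by positivity)
        exact hIF
end
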